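/- arXiv:0801.0939 — 6 statements merged into one kernel-verified Lean document; each statement's English description precedes it below -/
import Mathlib

section
/- For every integer d ≥ 2 there exists a convex polytope Q of dimension d (namely the prism Δ × I over a (d-1)-dimensional simplex Δ, where I is a line segment) such that the graph G_{d-2}(Q) is not (d+1)-vertex-connected: deleting the d nodes corresponding to the edges v × I of Q, where v ranges over the vertices of Δ, disconnects the graph. -/
open Set

/-- A convex polytope in `ℝ^N`: the convex hull of a finite set of points. -/
def IsPolytope {N : ℕ} (P : Set (EuclideanSpace ℝ (Fin N))) : Prop :=
  ∃ S : Set (EuclideanSpace ℝ (Fin N)), S.Finite ∧ P = convexHull ℝ S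

/-- The dimension of a subset of `ℝ^N`: the dimension of its affine hull. -/
noncomputable def sdim {N : ℕ} (P : Set (EuclideanSpace ℝ (Fin N))) : ℕ :=
  Module.finrank ℝ (affineSpan ℝ P).direction

/-- `F` is a face of `P` of dimension `k`: a nonempty exposed subset of `P`
(the set of minimizers over `P` of some linear functional) of dimension `k`. -/
def IsFaceDim {N : ℕ} (P F : Set (EuclideanSpace ℝ (Fin N))) (k : ℕ) : Prop :=
  IsExposed ℝ P F ∧ F.Nonempty ∧ sdim F = k

/-- The graph `G_k(P)` on the `k`-dimensional faces of `P`: two such faces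
are adjacent if some `(k+1)`-dimensional face of `P` contains both. -/
def faceGraph {N : ℕ} (P : Set (EuclideanSpace ℝ (Fin N))) (k : ℕ) :
    SimpleGraph {F : Set (EuclideanSpace ℝ (Fin N)) // IsFaceDim P F k} :=
  SimpleGraph.fromRel (fun F F' => ∃ G, IsFaceDim P G (k + 1) ∧ F.1 ⊆ G ∧ F'.1 ⊆ G)

/-- A graph is `m`-connected if it has at least `m+1` nodes and deleting any set
of at most `m-1` nodes (and incident edges) leaves a connected graph. -/
def MConnected {V : Type*} (G : SimpleGraph V) (m : ℕ) : Prop :=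
  m + 1 ≤ Nat.card V ∧
    ∀ S : Set V, S.Finite → S.ncard < m → (G.induce Sᶜ).Connected

noncomputable section StmtAux


variable {d : ℕ}

abbrev Eu (d : ℕ) := EuclideanSpace ℝ (Fin d)

noncomputable instance euDecEq (d : ℕ) : DecidableEq (Eu d) := Classical.decEq _

def ee (d : ℕ) (i : Fin d) : Eu d := EuclideanSpace.single i 1

def tv (d : ℕ) : Eu d := (2/(d:ℝ)) • ∑ i, ee d i

def lc (c : Fin d → ℝ) : Eu d →L[ℝ] ℝ := innerSL ℝ ((WithLp.equiv 2 (Fin d → ℝ)).symm c)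

lemma lc_apply (c : Fin d → ℝ) (x : Eu d) : lc c x = ∑ i, c i * x i := by
  simp [lc, PiLp.inner_apply, mul_comm]

lemma lc_ee (c : Fin d → ℝ) (i : Fin d) : lc c (ee d i) = c i := by
  simp [lc_apply, ee, EuclideanSpace.single_apply, mul_ite]

lemma lc_zero (c : Fin d → ℝ) : lc c (0 : Eu d) = 0 := by simp

lemma lc_tv (c : Fin d → ℝ) : lc c (tv d) = (2/(d:ℝ)) * ∑ i, c i := by
  simp [tv, map_smul, map_sum, lc_ee, smul_eq_mul]




lemma hull_le {W : Set (Eu d)} (l : Eu d →L[ℝ] ℝ) (r : ℝ) (h : ∀ w ∈ W, l w ≤ r) :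
    ∀ x ∈ convexHull ℝ W, l x ≤ r :=
  fun _x hx => convexHull_min h (convex_halfSpace_le ⟨map_add l, map_smul l⟩ r) hx

lemma hull_ge {W : Set (Eu d)} (l : Eu d →L[ℝ] ℝ) (r : ℝ) (h : ∀ w ∈ W, r ≤ l w) :
    ∀ x ∈ convexHull ℝ W, r ≤ l x :=
  fun _x hx => convexHull_min h (convex_halfSpace_ge ⟨map_add l, map_smul l⟩ r) hx

lemma argmax_hull (V : Finset (Eu d)) (l : Eu d →L[ℝ] ℝ) (M : ℝ)
    (h : ∀ v ∈ V, l v ≤ M) :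
    {x ∈ convexHull ℝ (V : Set (Eu d)) | l x = M}
      = convexHull ℝ ((V.filter fun v => l v = M : Finset (Eu d)) : Set (Eu d)) := by
  classical
  ext x
  constructor
  · rintro ⟨hxV, hxM⟩
    rw [Finset.convexHull_eq] at hxV
    obtain ⟨w, hw0, hw1, hcm⟩ := hxV
    rw [Finset.centerMass_eq_of_sum_1 _ _ hw1] at hcm
    have hlx : ∑ y ∈ V, w y * l y = M := by
      rw [← hxM, ← hcm, map_sum]; simp [smul_eq_mul]
    have hsum0 : ∑ y ∈ V, w y * (M - l y) = 0 := by
      have : ∑ y ∈ V, w y * (M - l y) = M * (∑ y ∈ V, w y) - ∑ y ∈ V, w y * l y := by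
        rw [Finset.mul_sum, ← Finset.sum_sub_distrib]; congr 1; ext y; ring
      rw [this, hw1, hlx]; ring
    have hterm : ∀ y ∈ V, w y * (M - l y) = 0 :=
      (Finset.sum_eq_zero_iff_of_nonneg
        (fun y hy => mul_nonneg (hw0 y hy) (by linarith [h y hy]))).1 hsum0
    have hWsub : ∀ y ∈ V.filter (fun v => w v ≠ 0), y ∈ ((V.filter fun v => l v = M : Finset (Eu d)) : Set (Eu d)) := by
      intro y hy
      rw [Finset.mem_filter] at hy
      have := hterm y hy.1
      rcases mul_eq_zero.1 this with h1 | h2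
      · exact absurd h1 hy.2
      · simp only [Finset.coe_filter, mem_setOf_eq]; exact ⟨hy.1, by linarith⟩
    have hx' : (V.filter fun v => w v ≠ 0).centerMass w id = x := by
      rw [Finset.centerMass_filter_ne_zero]; rw [Finset.centerMass_eq_of_sum_1 _ _ hw1]
      simpa using hcm
    rw [← hx']
    exact Finset.centerMass_mem_convexHull _ (fun i hi => hw0 i (Finset.mem_filter.1 hi).1)
      (by rw [Finset.sum_filter_ne_zero, hw1]; norm_num) (fun i hi => hWsub i hi)
  · intro hx
    have hsub : (↑(V.filter fun v => l v = M) : Set (Eu d)) ⊆ (V : Set (Eu d)) := by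
      intro y hy; simp only [Finset.coe_filter, mem_setOf_eq] at hy; exact hy.1
    refine ⟨convexHull_mono hsub hx, le_antisymm (hull_le l M (fun w hw => h w (hsub hw)) x hx) ?_⟩
    refine hull_ge l M ?_ x hx
    intro y hy; simp only [Finset.coe_filter, mem_setOf_eq] at hy; exact le_of_eq hy.2.symm

/-- a filtered argmax hull is an exposed face -/
lemma isExposed_argmax (V : Finset (Eu d)) (l : Eu d →L[ℝ] ℝ) (M : ℝ)
    (h : ∀ v ∈ V, l v ≤ M) (hne : ∃ v ∈ V, l v = M) :
    IsExposed ℝ (convexHull ℝ (V : Set (Eu d)))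
      (convexHull ℝ ((V.filter fun v => l v = M : Finset (Eu d)) : Set (Eu d))) := by
  classical
  intro _
  refine ⟨l, ?_⟩
  rw [← argmax_hull V l M h]
  ext x
  simp only [mem_setOf_eq]
  constructor
  · rintro ⟨hxV, hxM⟩
    exact ⟨hxV, fun y hy => (hull_le l M h y hy).trans hxM.ge⟩
  · rintro ⟨hxV, hmax⟩
    obtain ⟨v, hv, hvM⟩ := hne
    have hvhull : v ∈ convexHull ℝ (V : Set (Eu d)) := subset_convexHull ℝ _ hv
    exact ⟨hxV, le_antisymm (hull_le l M h x hxV) (hvM ▸ hmax v hvhull)⟩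

/-- every nonempty exposed face of a polytope is the hull of an argmax subset -/
lemma exposed_eq_argmax (V : Finset (Eu d)) {F : Set (Eu d)}
    (hF : IsExposed ℝ (convexHull ℝ (V : Set (Eu d))) F) (hne : F.Nonempty) :
    ∃ (l : Eu d →L[ℝ] ℝ) (M : ℝ), (∀ v ∈ V, l v ≤ M) ∧
      F = convexHull ℝ ((V.filter fun v => l v = M : Finset (Eu d)) : Set (Eu d)) := by
  classical
  obtain ⟨l, hFeq⟩ := hF hne
  obtain ⟨x0, hx0⟩ := hne
  have hx0' := hFeq ▸ hx0
  obtain ⟨hx0V, hx0max⟩ := hx0'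
  refine ⟨l, l x0, fun v hv => hx0max v (subset_convexHull ℝ _ hv), ?_⟩
  rw [← argmax_hull V l (l x0) (fun v hv => hx0max v (subset_convexHull ℝ _ hv)), hFeq]
  ext x
  simp only [mem_setOf_eq]
  constructor
  · rintro ⟨hxV, hmax⟩
    exact ⟨hxV, le_antisymm (hx0max x hxV) (hmax x0 hx0V)⟩
  · rintro ⟨hxV, hxM⟩
    exact ⟨hxV, fun y hy => (hx0max y hy).trans hxM.ge⟩






lemma Eu_sum_apply {ι : Type*} (s : Finset ι) (f : ι → Eu d) (j : Fin d) :
    (∑ i ∈ s, f i) j = ∑ i ∈ s, f i j := by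
  have h := congrFun (map_sum (WithLp.linearEquiv 2 ℝ (Fin d → ℝ)) f s) j
  rw [Finset.sum_apply] at h
  exact h

lemma ee_apply (i j : Fin d) : ee d i j = if j = i then 1 else 0 := by
  simp [ee, EuclideanSpace.single_apply]

lemma tv_apply (hd : 1 ≤ d) (j : Fin d) : tv d j = 2/(d:ℝ) := by
  have h1 : tv d j = (2/(d:ℝ)) * (∑ i, ee d i) j := rfl
  rw [h1, Eu_sum_apply]
  simp only [ee_apply]
  rw [Finset.sum_ite_eq Finset.univ j (fun _ => (1:ℝ))]
  simp

lemma ee_inj : Function.Injective (ee d) := by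
  intro i j h
  have := congrFun (congrArg WithLp.ofLp h) i
  rw [ee_apply, ee_apply, if_pos rfl] at this
  by_contra hne
  rw [if_neg (fun hh : i = j => hne hh)] at this
  norm_num at this

lemma ee_ne_zero (i : Fin d) : ee d i ≠ 0 := by
  intro h
  have := congrFun (congrArg WithLp.ofLp h) i
  rw [ee_apply, if_pos rfl] at this
  norm_num at this

lemma dpos (hd : 2 ≤ d) : (0:ℝ) < (d:ℝ) := by positivity

lemma tv_ne_zero (hd : 2 ≤ d) : tv d ≠ 0 := by
  intro h
  have j : Fin d := ⟨0, by omega⟩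
  have h2 := congrFun (congrArg WithLp.ofLp h) j
  rw [tv_apply (by omega)] at h2
  have : (0:ℝ) < (d:ℝ) := by
    have : 0 < d := by omega
    exact_mod_cast this
  have : (0:ℝ) < 2/(d:ℝ) := by positivity
  rw [show ((0:Eu d) j) = (0:ℝ) from rfl] at h2
  linarith

lemma tv_ne_ee (hd : 2 ≤ d) (i : Fin d) : tv d ≠ ee d i := by
  intro h
  obtain ⟨j, hj⟩ : ∃ j : Fin d, j ≠ i := by
    by_cases h0 : i = ⟨0, by omega⟩
    · exact ⟨⟨1, by omega⟩, by simp [h0, Fin.ext_iff]⟩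
    · exact ⟨⟨0, by omega⟩, fun hh => h0 hh.symm⟩
  have h2 := congrFun (congrArg WithLp.ofLp h) j
  rw [tv_apply (by omega), ee_apply, if_neg hj] at h2
  have : (0:ℝ) < (d:ℝ) := by
    have : 0 < d := by omega
    exact_mod_cast this
  have : (0:ℝ) < 2/(d:ℝ) := by positivity
  linarith

lemma linIndep_ee : LinearIndependent ℝ (ee d) := by
  rw [Fintype.linearIndependent_iff]
  intro g hg i
  have h2 := congrFun (congrArg WithLp.ofLp hg) i
  rw [show ((0: Eu d) i) = (0:ℝ) from rfl] at h2
  rw [show ((∑ j, g j • ee d j) i) = ∑ j, g j * (ee d j i) from by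
    rw [Eu_sum_apply]; rfl] at h2
  simp only [ee_apply, mul_ite, mul_one, mul_zero] at h2
  rwa [Finset.sum_ite_eq Finset.univ i g, if_pos (Finset.mem_univ i)] at h2

lemma linIndep_ee_sub_tv (hd : 2 ≤ d) : LinearIndependent ℝ (fun i => ee d i - tv d) := by
  rw [Fintype.linearIndependent_iff]
  intro g hg
  have key : ∀ j : Fin d, g j = (2/(d:ℝ)) * ∑ i, g i := by
    intro j
    have h2 := congrFun (congrArg WithLp.ofLp hg) j
    rw [show ((0: Eu d) j) = (0:ℝ) from rfl] at h2
    rw [show ((∑ i, g i • (ee d i - tv d)) j) = ∑ i, g i * (ee d i j - tv d j) from by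
      rw [Eu_sum_apply]; rfl] at h2
    simp only [ee_apply, tv_apply (show 1 ≤ d by omega), mul_sub] at h2
    rw [Finset.sum_sub_distrib] at h2
    simp only [mul_ite, mul_one, mul_zero] at h2
    rw [Finset.sum_ite_eq Finset.univ j g, if_pos (Finset.mem_univ j), ← Finset.sum_mul] at h2
    have : g j = (∑ i, g i) * (2/(d:ℝ)) := by linarith
    rw [this]; ring
  have hsum : ∑ i, g i = 0 := by
    have hdr : (d:ℝ) ≠ 0 := Nat.cast_ne_zero.mpr (by omega)
    have h2 := Finset.sum_congr rfl (fun j (_ : j ∈ Finset.univ) => key j)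
    rw [Finset.sum_const, Finset.card_univ, Fintype.card_fin, nsmul_eq_mul, ← mul_assoc,
      show (d:ℝ) * (2/(d:ℝ)) = 2 from by field_simp] at h2
    linarith
  intro i; rw [key i, hsum]; ring

lemma affIndep_family (z : Eu d) (h : LinearIndependent ℝ (fun i => ee d i - z)) :
    AffineIndependent ℝ (fun o : Option (Fin d) => o.elim z (ee d)) := by
  rw [affineIndependent_iff_linearIndependent_vsub ℝ _ none]
  let E : Fin d ≃ {x : Option (Fin d) // x ≠ none} :=
    { toFun := fun i => ⟨some i, by simp⟩
      invFun := fun x => x.1.get (Option.ne_none_iff_isSome.1 x.2)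
      left_inv := fun i => rfl
      right_inv := fun x => by
        ext
        simp [Option.some_get] }
  refine (linearIndependent_equiv' E ?_).mp h
  funext i
  rfl

lemma range_elim (z : Eu d) :
    Set.range (fun o : Option (Fin d) => o.elim z (ee d)) = insert z (Set.range (ee d)) := by
  ext x
  constructor
  · rintro ⟨(_ | i), rfl⟩
    · exact mem_insert _ _
    · exact subset_insert _ _ ⟨i, rfl⟩
  · rintro (rfl | ⟨i, rfl⟩)
    · exact ⟨none, rfl⟩
    · exact ⟨some i, rfl⟩

lemma affIndep_insert0 : AffineIndependent ℝ
    (fun x => x : (insert (0:Eu d) (Set.range (ee d)) : Set (Eu d)) → Eu d) := by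
  have h := affIndep_family (0 : Eu d) (by simpa using linIndep_ee)
  have := h.range
  rwa [range_elim] at this

lemma affIndep_insertT (hd : 2 ≤ d) : AffineIndependent ℝ
    (fun x => x : (insert (tv d) (Set.range (ee d)) : Set (Eu d)) → Eu d) := by
  have hli : LinearIndependent ℝ (fun i => ee d i - tv d) := linIndep_ee_sub_tv hd
  have h := affIndep_family (tv d) hli
  have := h.range
  rwa [range_elim] at this

lemma finrank_hull_affIndep (W : Finset (Eu d)) (hne : W.Nonempty)
    (hW : AffineIndependent ℝ (fun x => x : ((W : Set (Eu d))) → Eu d)) :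
    Module.finrank ℝ (affineSpan ℝ (convexHull ℝ (W : Set (Eu d)))).direction = W.card - 1 := by
  rw [affineSpan_convexHull, direction_affineSpan]
  rw [show vectorSpan ℝ (W : Set (Eu d))
      = vectorSpan ℝ (Set.range (fun x => x : ((W : Set (Eu d))) → Eu d)) from by
    rw [Subtype.range_coe]]
  refine hW.finrank_vectorSpan ?_
  have : Fintype.card (W : Set (Eu d)) = W.card := by
    simp [Fintype.card_coe]
  rw [this]
  have := hne.card_pos
  omega
def Vf (d : ℕ) : Finset (Eu d) := insert 0 (insert (tv d) (Finset.image (ee d) Finset.univ))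

lemma mem_Vf {v : Eu d} : v ∈ Vf d ↔ v = 0 ∨ v = tv d ∨ ∃ i, v = ee d i := by
  simp [Vf, eq_comm]

def M0 (d : ℕ) (j : Fin d) : Set (Eu d) := insert 0 (ee d '' {i | i ≠ j})
def Mt (d : ℕ) (j : Fin d) : Set (Eu d) := insert (tv d) (ee d '' {i | i ≠ j})

lemma lc_one_tv (hd : 2 ≤ d) : lc (fun _ => (1:ℝ)) (tv d) = 2 := by
  rw [lc_tv]
  have hdr : (d:ℝ) ≠ 0 := Nat.cast_ne_zero.mpr (by omega)
  simp [Finset.sum_const, Finset.card_univ]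
  field_simp

lemma tv_not_mem_hull_M0 (hd : 2 ≤ d) (j : Fin d) : tv d ∉ convexHull ℝ (M0 d j) := by
  intro hmem
  have hb : ∀ w ∈ M0 d j, lc (fun _ => (1:ℝ)) w ≤ 1 := by
    rintro w (rfl | ⟨i, _, rfl⟩)
    · rw [lc_zero]; norm_num
    · rw [lc_ee]
  have := hull_le _ 1 hb _ hmem
  rw [lc_one_tv hd] at this
  norm_num at this

lemma eej_not_mem_hull_M0 (j : Fin d) : ee d j ∉ convexHull ℝ (M0 d j) := by
  intro hmem
  have hb : ∀ w ∈ M0 d j, lc (fun i => if i = j then (1:ℝ) else 0) w ≤ 0 := by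
    rintro w (rfl | ⟨i, hi, rfl⟩)
    · rw [lc_zero]
    · rw [lc_ee, if_neg hi]
  have := hull_le _ 0 hb _ hmem
  rw [lc_ee, if_pos rfl] at this
  norm_num at this

lemma zero_not_mem_hull_Mt (hd : 2 ≤ d) (j : Fin d) : (0 : Eu d) ∉ convexHull ℝ (Mt d j) := by
  intro hmem
  have hb : ∀ w ∈ Mt d j, 1 ≤ lc (fun _ => (1:ℝ)) w := by
    rintro w (rfl | ⟨i, _, rfl⟩)
    · rw [lc_one_tv hd]; norm_num
    · rw [lc_ee]
  have := hull_ge _ 1 hb _ hmem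
  rw [lc_zero] at this
  norm_num at this

lemma eej_not_mem_hull_Mt (hd : 2 ≤ d) (j : Fin d) : ee d j ∉ convexHull ℝ (Mt d j) := by
  intro hmem
  have hdr : (0:ℝ) < (d:ℝ) := by
    have : 0 < d := by omega
    exact_mod_cast this
  have hb : ∀ w ∈ Mt d j, 1 ≤ lc (fun i => if i = j then (0:ℝ) else 1) w := by
    rintro w (rfl | ⟨i, hi, rfl⟩)
    · rw [lc_tv]
      have hsum : ∑ i, (if i = j then (0:ℝ) else 1) = (d:ℝ) - 1 := by
        rw [Finset.sum_congr rfl (fun i (_ : i ∈ Finset.univ) =>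
          show (if i = j then (0:ℝ) else 1) = 1 - (if i = j then (1:ℝ) else 0) from by
            split_ifs <;> norm_num)]
        rw [Finset.sum_sub_distrib, Finset.sum_const, Finset.card_univ, Fintype.card_fin,
          Finset.sum_ite_eq' Finset.univ j (fun _ => (1:ℝ)), if_pos (Finset.mem_univ j)]
        simp
      rw [hsum]
      rw [div_mul_eq_mul_div, le_div_iff₀ hdr]
      have h2 : (2:ℝ) ≤ (d:ℝ) := by exact_mod_cast hd
      nlinarith
    · rw [lc_ee, if_neg hi]
  have := hull_ge _ 1 hb _ hmem
  rw [lc_ee, if_pos rfl] at this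
  norm_num at this

lemma l_tv_general (l : Eu d →L[ℝ] ℝ) : l (tv d) = (2/(d:ℝ)) * ∑ i, l (ee d i) := by
  rw [tv, map_smul, map_sum, smul_eq_mul]

lemma zero_mem_Vf : (0 : Eu d) ∈ Vf d := by simp [mem_Vf]
lemma tv_mem_Vf : tv d ∈ Vf d := by simp [mem_Vf]
lemma ee_mem_Vf (i : Fin d) : ee d i ∈ Vf d := mem_Vf.2 (Or.inr (Or.inr ⟨i, rfl⟩))

lemma argmax_classify (hd : 2 ≤ d) (l : Eu d →L[ℝ] ℝ) (M : ℝ) (h : ∀ v ∈ Vf d, l v ≤ M)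
    (hproper : (Vf d).filter (fun v => l v = M) ≠ Vf d) :
    (∃ j, (((Vf d).filter (fun v => l v = M)) : Set (Eu d)) ⊆ M0 d j) ∨
    (∃ j, (((Vf d).filter (fun v => l v = M)) : Set (Eu d)) ⊆ Mt d j) := by
  classical
  set W := (Vf d).filter (fun v => l v = M) with hWdef
  have hdr : (d:ℝ) ≠ 0 := Nat.cast_ne_zero.mpr (by omega)
  have h2d : (2/(d:ℝ)) ≠ 0 := by positivity
  have hmemW : ∀ v, v ∈ W ↔ v ∈ Vf d ∧ l v = M := fun v => Finset.mem_filter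
  have hfull : (∀ v ∈ Vf d, l v = M) → False := by
    intro hall
    exact hproper (Finset.filter_true_of_mem hall)
  have hcase1 : ¬ ((0:Eu d) ∈ W ∧ tv d ∈ W) := by
    rintro ⟨h0, ht⟩
    have hM : M = 0 := by
      have h' := (hmemW _ |>.1 h0).2
      rw [map_zero] at h'
      exact h'.symm
    have htv : l (tv d) = M := (hmemW _ |>.1 ht).2
    rw [l_tv_general, hM] at htv
    have hsum : ∑ i, l (ee d i) = 0 := by
      rcases mul_eq_zero.1 htv with h1 | h2
      · exact absurd h1 h2d
      · exact h2
    have hall : ∀ i ∈ Finset.univ, l (ee d i) = 0 :=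
      (Finset.sum_eq_zero_iff_of_nonpos (fun i _ => by
        have h' := h _ (ee_mem_Vf i); rw [hM] at h'; exact h')).1 hsum
    refine hfull ?_
    intro v hv
    rcases mem_Vf.1 hv with rfl | rfl | ⟨i, rfl⟩
    · rw [map_zero, hM]
    · rw [l_tv_general, hsum, hM]; ring
    · rw [hall i (Finset.mem_univ i), hM]
  have hcase2 : ¬ (∀ i, l (ee d i) = M) := by
    intro hall
    have htvle := h _ tv_mem_Vf
    rw [l_tv_general, Finset.sum_congr rfl (fun i _ => hall i), Finset.sum_const,
      Finset.card_univ, Fintype.card_fin, nsmul_eq_mul, ← mul_assoc,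
      show (2/(d:ℝ)) * (d:ℝ) = 2 from by field_simp] at htvle
    have h0le := h _ zero_mem_Vf
    rw [map_zero] at h0le
    have hM : M = 0 := by linarith
    refine hfull ?_
    intro v hv
    rcases mem_Vf.1 hv with rfl | rfl | ⟨i, rfl⟩
    · rw [map_zero, hM]
    · rw [l_tv_general, Finset.sum_congr rfl (fun i _ => hall i), hM, Finset.sum_const,
        Finset.card_univ, Fintype.card_fin]; simp
    · exact hall i
  push_neg at hcase2
  obtain ⟨j, hj⟩ := hcase2
  have hjW : ee d j ∉ W := fun hmem => hj (hmemW _ |>.1 hmem).2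
  by_cases htW : tv d ∈ W
  · right
    refine ⟨j, ?_⟩
    intro v hv
    rw [Finset.mem_coe, hmemW] at hv
    rcases mem_Vf.1 hv.1 with rfl | rfl | ⟨i, rfl⟩
    · exact absurd ⟨(hmemW _).2 hv, htW⟩ hcase1
    · exact Set.mem_insert _ _
    · refine Set.mem_insert_of_mem _ ⟨i, ?_, rfl⟩
      intro hij
      exact hjW (hij ▸ (hmemW _).2 hv)
  · left
    refine ⟨j, ?_⟩
    intro v hv
    rw [Finset.mem_coe, hmemW] at hv
    rcases mem_Vf.1 hv.1 with rfl | rfl | ⟨i, rfl⟩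
    · exact Set.mem_insert _ _
    · exact absurd ((hmemW _).2 hv) htW
    · refine Set.mem_insert_of_mem _ ⟨i, ?_, rfl⟩
      intro hij
      exact hjW (hij ▸ (hmemW _).2 hv)

lemma finrank_Q (hd : 2 ≤ d) :
    Module.finrank ℝ (affineSpan ℝ (convexHull ℝ ((Vf d : Set (Eu d))))).direction = d := by
  rw [affineSpan_convexHull, direction_affineSpan]
  have h1 : Submodule.span ℝ (Set.range (ee d)) ≤ vectorSpan ℝ ((Vf d : Set (Eu d))) := by
    rw [Submodule.span_le]
    rintro x ⟨i, rfl⟩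
    have := vsub_mem_vectorSpan ℝ (Finset.mem_coe.2 (ee_mem_Vf i)) (Finset.mem_coe.2 zero_mem_Vf)
    simpa [vsub_eq_sub] using this
  have h2 : Module.finrank ℝ (Submodule.span ℝ (Set.range (ee d))) = d := by
    rw [finrank_span_eq_card linIndep_ee, Fintype.card_fin]
  have h3 := Submodule.finrank_mono h1
  rw [h2] at h3
  have h4 : Module.finrank ℝ (vectorSpan ℝ ((Vf d : Set (Eu d)))) ≤ d := by
    have := Submodule.finrank_le (vectorSpan ℝ ((Vf d : Set (Eu d))))
    rwa [finrank_euclideanSpace_fin] at this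
  omega

lemma mem_M0_of_mem_hull (hd : 2 ≤ d) {j : Fin d} {v : Eu d} (hv : v ∈ Vf d)
    (hx : v ∈ convexHull ℝ (M0 d j)) : v ∈ M0 d j := by
  rcases mem_Vf.1 hv with rfl | rfl | ⟨i, rfl⟩
  · exact Set.mem_insert _ _
  · exact absurd hx (tv_not_mem_hull_M0 hd j)
  · by_cases hij : i = j
    · exact absurd hx (hij ▸ eej_not_mem_hull_M0 j)
    · exact Set.mem_insert_of_mem _ ⟨i, hij, rfl⟩

lemma mem_Mt_of_mem_hull (hd : 2 ≤ d) {j : Fin d} {v : Eu d} (hv : v ∈ Vf d)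
    (hx : v ∈ convexHull ℝ (Mt d j)) : v ∈ Mt d j := by
  rcases mem_Vf.1 hv with rfl | rfl | ⟨i, rfl⟩
  · exact absurd hx (zero_not_mem_hull_Mt hd j)
  · exact Set.mem_insert _ _
  · by_cases hij : i = j
    · exact absurd hx (hij ▸ eej_not_mem_hull_Mt hd j)
    · exact Set.mem_insert_of_mem _ ⟨i, hij, rfl⟩

lemma M0_sub (j : Fin d) : M0 d j ⊆ insert (0 : Eu d) (Set.range (ee d)) :=
  Set.insert_subset_insert (Set.image_subset_range _ _)

lemma Mt_sub (j : Fin d) : Mt d j ⊆ insert (tv d) (Set.range (ee d)) :=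
  Set.insert_subset_insert (Set.image_subset_range _ _)

lemma affIndep_of_sub_M0 {W : Finset (Eu d)} {j : Fin d} (h : (W : Set (Eu d)) ⊆ M0 d j) :
    AffineIndependent ℝ (fun x => x : ((W : Set (Eu d))) → Eu d) :=
  affIndep_insert0.mono (h.trans (M0_sub j))

lemma affIndep_of_sub_Mt (hd : 2 ≤ d) {W : Finset (Eu d)} {j : Fin d}
    (h : (W : Set (Eu d)) ⊆ Mt d j) :
    AffineIndependent ℝ (fun x => x : ((W : Set (Eu d))) → Eu d) :=
  (affIndep_insertT hd).mono (h.trans (Mt_sub j))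

lemma sum_ite_single (j : Fin d) (a b : ℝ) :
    ∑ i : Fin d, (if i = j then a else b) = a + ((d:ℝ) - 1) * b := by
  rw [Finset.sum_congr rfl (fun i (_ : i ∈ Finset.univ) =>
    show (if i = j then a else b) = b + (if i = j then a - b else 0) from by
      split_ifs <;> ring)]
  rw [Finset.sum_add_distrib, Finset.sum_const, Finset.card_univ, Fintype.card_fin,
    Finset.sum_ite_eq' Finset.univ j (fun _ => a - b), if_pos (Finset.mem_univ j),
    nsmul_eq_mul]
  ring

lemma sum_ite_pair {j0 j1 : Fin d} (hne : j0 ≠ j1) (a b : ℝ) :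
    ∑ i : Fin d, (if i = j0 ∨ i = j1 then a else b) = 2*a + ((d:ℝ) - 2) * b := by
  rw [Finset.sum_congr rfl (fun i (_ : i ∈ Finset.univ) =>
    show (if i = j0 ∨ i = j1 then a else b)
        = b + (if i = j0 then a - b else 0) + (if i = j1 then a - b else 0) from by
      by_cases h0 : i = j0
      · rw [if_pos (Or.inl h0), if_pos h0, if_neg (fun hh : i = j1 => hne (h0.symm.trans hh))]
        ring
      · by_cases h1 : i = j1
        · rw [if_pos (Or.inr h1), if_neg h0, if_pos h1]; ring
        · rw [if_neg (fun hh : i = j0 ∨ i = j1 => hh.elim h0 h1), if_neg h0, if_neg h1]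
          ring)]
  rw [Finset.sum_add_distrib, Finset.sum_add_distrib, Finset.sum_const, Finset.card_univ,
    Fintype.card_fin, Finset.sum_ite_eq' Finset.univ j0 (fun _ => a - b),
    Finset.sum_ite_eq' Finset.univ j1 (fun _ => a - b), if_pos (Finset.mem_univ j0),
    if_pos (Finset.mem_univ j1), nsmul_eq_mul]
  ring

def SjF (d : ℕ) (j : Fin d) : Finset (Eu d) := Finset.image (ee d) (Finset.univ.erase j)

def WaF (d : ℕ) (j0 j1 : Fin d) : Finset (Eu d) :=
  insert 0 (Finset.image (ee d) ((Finset.univ.erase j0).erase j1))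

def WbF (d : ℕ) (j0 j1 : Fin d) : Finset (Eu d) :=
  insert (tv d) (Finset.image (ee d) ((Finset.univ.erase j0).erase j1))

lemma exists_ne_fin (hd : 2 ≤ d) (j : Fin d) : ∃ i : Fin d, i ≠ j := by
  by_cases h0 : j = ⟨0, by omega⟩
  · exact ⟨⟨1, by omega⟩, by simp [h0, Fin.ext_iff]⟩
  · exact ⟨⟨0, by omega⟩, fun hh => h0 hh.symm⟩

lemma mem_SjF {j : Fin d} {v : Eu d} : v ∈ SjF d j ↔ ∃ i, i ≠ j ∧ v = ee d i := by
  simp [SjF, Finset.mem_image, Finset.mem_erase, eq_comm, and_comm]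

lemma mem_WaF {j0 j1 : Fin d} {v : Eu d} :
    v ∈ WaF d j0 j1 ↔ v = 0 ∨ ∃ i, i ≠ j0 ∧ i ≠ j1 ∧ v = ee d i := by
  simp only [WaF, Finset.mem_insert, Finset.mem_image, Finset.mem_erase, Finset.mem_univ,
    and_true]
  constructor
  · rintro (rfl | ⟨i, ⟨hi1, hi0⟩, rfl⟩)
    · exact Or.inl rfl
    · exact Or.inr ⟨i, hi0, hi1, rfl⟩
  · rintro (rfl | ⟨i, hi0, hi1, rfl⟩)
    · exact Or.inl rfl
    · exact Or.inr ⟨i, ⟨hi1, hi0⟩, rfl⟩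

lemma mem_WbF {j0 j1 : Fin d} {v : Eu d} :
    v ∈ WbF d j0 j1 ↔ v = tv d ∨ ∃ i, i ≠ j0 ∧ i ≠ j1 ∧ v = ee d i := by
  simp only [WbF, Finset.mem_insert, Finset.mem_image, Finset.mem_erase, Finset.mem_univ,
    and_true]
  constructor
  · rintro (rfl | ⟨i, ⟨hi1, hi0⟩, rfl⟩)
    · exact Or.inl rfl
    · exact Or.inr ⟨i, hi0, hi1, rfl⟩
  · rintro (rfl | ⟨i, hi0, hi1, rfl⟩)
    · exact Or.inl rfl
    · exact Or.inr ⟨i, ⟨hi1, hi0⟩, rfl⟩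

lemma SjF_sub_Vf (j : Fin d) : SjF d j ⊆ Vf d := by
  intro v hv
  obtain ⟨i, _, rfl⟩ := mem_SjF.1 hv
  exact ee_mem_Vf i

lemma card_SjF (hd : 2 ≤ d) (j : Fin d) : (SjF d j).card = d - 1 := by
  rw [SjF, Finset.card_image_of_injective _ ee_inj, Finset.card_erase_of_mem (Finset.mem_univ j),
    Finset.card_univ, Fintype.card_fin]

lemma card_WaF (hd : 2 ≤ d) {j0 j1 : Fin d} (hne : j0 ≠ j1) : (WaF d j0 j1).card = d - 1 := by
  rw [WaF, Finset.card_insert_of_notMem (by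
    intro hmem
    obtain ⟨i, _, hi⟩ := Finset.mem_image.1 hmem
    exact ee_ne_zero i hi)]
  rw [Finset.card_image_of_injective _ ee_inj,
    Finset.card_erase_of_mem (Finset.mem_erase.2 ⟨hne.symm, Finset.mem_univ j1⟩),
    Finset.card_erase_of_mem (Finset.mem_univ j0), Finset.card_univ, Fintype.card_fin]
  omega

lemma card_WbF (hd : 2 ≤ d) {j0 j1 : Fin d} (hne : j0 ≠ j1) : (WbF d j0 j1).card = d - 1 := by
  rw [WbF, Finset.card_insert_of_notMem (by
    intro hmem
    obtain ⟨i, _, hi⟩ := Finset.mem_image.1 hmem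
    exact tv_ne_ee hd i hi.symm)]
  rw [Finset.card_image_of_injective _ ee_inj,
    Finset.card_erase_of_mem (Finset.mem_erase.2 ⟨hne.symm, Finset.mem_univ j1⟩),
    Finset.card_erase_of_mem (Finset.mem_univ j0), Finset.card_univ, Fintype.card_fin]
  omega

lemma SjF_sub_M0 (j : Fin d) : ((SjF d j : Finset (Eu d)) : Set (Eu d)) ⊆ M0 d j := by
  intro v hv
  obtain ⟨i, hij, rfl⟩ := mem_SjF.1 (Finset.mem_coe.1 hv)
  exact Set.mem_insert_of_mem _ ⟨i, hij, rfl⟩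

lemma SjF_sub_Mt (j : Fin d) : ((SjF d j : Finset (Eu d)) : Set (Eu d)) ⊆ Mt d j := by
  intro v hv
  obtain ⟨i, hij, rfl⟩ := mem_SjF.1 (Finset.mem_coe.1 hv)
  exact Set.mem_insert_of_mem _ ⟨i, hij, rfl⟩

lemma WaF_sub_M0 {j0 j1 : Fin d} : ((WaF d j0 j1 : Finset (Eu d)) : Set (Eu d)) ⊆ M0 d j0 := by
  intro v hv
  rcases mem_WaF.1 (Finset.mem_coe.1 hv) with rfl | ⟨i, hi0, _, rfl⟩
  · exact Set.mem_insert _ _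
  · exact Set.mem_insert_of_mem _ ⟨i, hi0, rfl⟩

lemma WbF_sub_Mt {j0 j1 : Fin d} : ((WbF d j0 j1 : Finset (Eu d)) : Set (Eu d)) ⊆ Mt d j0 := by
  intro v hv
  rcases mem_WbF.1 (Finset.mem_coe.1 hv) with rfl | ⟨i, hi0, _, rfl⟩
  · exact Set.mem_insert _ _
  · exact Set.mem_insert_of_mem _ ⟨i, hi0, rfl⟩

lemma two_le_dR (hd : 2 ≤ d) : (2:ℝ) ≤ (d:ℝ) := by exact_mod_cast hd
lemma two_div_d_pos (hd : 2 ≤ d) : (0:ℝ) < 2/(d:ℝ) := by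
  have := two_le_dR hd; positivity

lemma filter_Sj (hd : 2 ≤ d) (j : Fin d) :
    (Vf d).filter (fun v => lc (fun i => if i = j then -(d:ℝ) else 1) v = 1) = SjF d j := by
  have hpos := two_div_d_pos hd
  have h2d := two_le_dR hd
  ext v
  rw [Finset.mem_filter, mem_SjF]
  constructor
  · rintro ⟨hv, hval⟩
    rcases mem_Vf.1 hv with rfl | rfl | ⟨i, rfl⟩
    · rw [lc_zero] at hval; norm_num at hval
    · exfalso
      rw [lc_tv, sum_ite_single j,
        show -(d:ℝ) + ((d:ℝ) - 1) * 1 = -1 from by ring] at hval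
      nlinarith
    · rw [lc_ee] at hval
      by_cases hij : i = j
      · rw [if_pos hij] at hval; exfalso; linarith
      · exact ⟨i, hij, rfl⟩
  · rintro ⟨i, hij, rfl⟩
    exact ⟨ee_mem_Vf i, by rw [lc_ee, if_neg hij]⟩

lemma bound_Sj (hd : 2 ≤ d) (j : Fin d) :
    ∀ v ∈ Vf d, lc (fun i => if i = j then -(d:ℝ) else 1) v ≤ 1 := by
  have hpos := two_div_d_pos hd
  have h2d := two_le_dR hd
  intro v hv
  rcases mem_Vf.1 hv with rfl | rfl | ⟨i, rfl⟩
  · rw [lc_zero]; norm_num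
  · rw [lc_tv, sum_ite_single j, show -(d:ℝ) + ((d:ℝ) - 1) * 1 = -1 from by ring]
    nlinarith
  · rw [lc_ee]; split_ifs <;> linarith

lemma isExposed_Sj (hd : 2 ≤ d) (j : Fin d) :
    IsExposed ℝ (convexHull ℝ ((Vf d : Finset (Eu d)) : Set (Eu d)))
      (convexHull ℝ ((SjF d j : Finset (Eu d)) : Set (Eu d))) := by
  obtain ⟨i, hij⟩ := exists_ne_fin hd j
  have h := isExposed_argmax (Vf d) (lc (fun i => if i = j then -(d:ℝ) else 1)) 1
    (bound_Sj hd j) ⟨ee d i, ee_mem_Vf i, by rw [lc_ee, if_neg hij]⟩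
  rwa [filter_Sj hd j] at h

lemma filter_Wa (hd : 2 ≤ d) {j0 j1 : Fin d} (hne : j0 ≠ j1) :
    (Vf d).filter (fun v => lc (fun i => if i = j0 ∨ i = j1 then (-1:ℝ) else 0) v = 0)
      = WaF d j0 j1 := by
  have hpos := two_div_d_pos hd
  ext v
  rw [Finset.mem_filter, mem_WaF]
  constructor
  · rintro ⟨hv, hval⟩
    rcases mem_Vf.1 hv with rfl | rfl | ⟨i, rfl⟩
    · exact Or.inl rfl
    · exfalso
      rw [lc_tv, sum_ite_pair hne, show 2*(-1:ℝ) + ((d:ℝ) - 2) * 0 = -2 from by ring] at hval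
      nlinarith
    · rw [lc_ee] at hval
      by_cases hi : i = j0 ∨ i = j1
      · rw [if_pos hi] at hval; norm_num at hval
      · push_neg at hi
        exact Or.inr ⟨i, hi.1, hi.2, rfl⟩
  · rintro (rfl | ⟨i, hi0, hi1, rfl⟩)
    · exact ⟨zero_mem_Vf, by rw [lc_zero]⟩
    · exact ⟨ee_mem_Vf i, by rw [lc_ee, if_neg (fun hh : i = j0 ∨ i = j1 => hh.elim hi0 hi1)]⟩

lemma bound_Wa (hd : 2 ≤ d) {j0 j1 : Fin d} (hne : j0 ≠ j1) :
    ∀ v ∈ Vf d, lc (fun i => if i = j0 ∨ i = j1 then (-1:ℝ) else 0) v ≤ 0 := by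
  have hpos := two_div_d_pos hd
  intro v hv
  rcases mem_Vf.1 hv with rfl | rfl | ⟨i, rfl⟩
  · rw [lc_zero]
  · rw [lc_tv, sum_ite_pair hne, show 2*(-1:ℝ) + ((d:ℝ) - 2) * 0 = -2 from by ring]
    nlinarith
  · rw [lc_ee]; split_ifs <;> norm_num

lemma isExposed_Wa (hd : 2 ≤ d) {j0 j1 : Fin d} (hne : j0 ≠ j1) :
    IsExposed ℝ (convexHull ℝ ((Vf d : Finset (Eu d)) : Set (Eu d)))
      (convexHull ℝ ((WaF d j0 j1 : Finset (Eu d)) : Set (Eu d))) := by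
  have h := isExposed_argmax (Vf d) (lc (fun i => if i = j0 ∨ i = j1 then (-1:ℝ) else 0)) 0
    (bound_Wa hd hne) ⟨0, zero_mem_Vf, by rw [lc_zero]⟩
  rwa [filter_Wa hd hne] at h

lemma lc_tv_Wb (hd : 2 ≤ d) {j0 j1 : Fin d} (hne : j0 ≠ j1) :
    lc (fun i => if i = j0 ∨ i = j1 then 1 - (d:ℝ)/4 else 1) (tv d) = 1 := by
  have hdr : (d:ℝ) ≠ 0 := Nat.cast_ne_zero.mpr (by omega)
  rw [lc_tv, sum_ite_pair hne,
    show 2*(1 - (d:ℝ)/4) + ((d:ℝ) - 2) * 1 = (d:ℝ)/2 from by ring]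
  field_simp

lemma filter_Wb (hd : 2 ≤ d) {j0 j1 : Fin d} (hne : j0 ≠ j1) :
    (Vf d).filter (fun v => lc (fun i => if i = j0 ∨ i = j1 then 1 - (d:ℝ)/4 else 1) v = 1)
      = WbF d j0 j1 := by
  have h2d := two_le_dR hd
  ext v
  rw [Finset.mem_filter, mem_WbF]
  constructor
  · rintro ⟨hv, hval⟩
    rcases mem_Vf.1 hv with rfl | rfl | ⟨i, rfl⟩
    · rw [lc_zero] at hval; norm_num at hval
    · exact Or.inl rfl
    · rw [lc_ee] at hval
      by_cases hi : i = j0 ∨ i = j1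
      · rw [if_pos hi] at hval; exfalso; linarith
      · push_neg at hi
        exact Or.inr ⟨i, hi.1, hi.2, rfl⟩
  · rintro (rfl | ⟨i, hi0, hi1, rfl⟩)
    · exact ⟨tv_mem_Vf, lc_tv_Wb hd hne⟩
    · exact ⟨ee_mem_Vf i, by rw [lc_ee, if_neg (fun hh : i = j0 ∨ i = j1 => hh.elim hi0 hi1)]⟩

lemma bound_Wb (hd : 2 ≤ d) {j0 j1 : Fin d} (hne : j0 ≠ j1) :
    ∀ v ∈ Vf d, lc (fun i => if i = j0 ∨ i = j1 then 1 - (d:ℝ)/4 else 1) v ≤ 1 := by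
  have h2d := two_le_dR hd
  intro v hv
  rcases mem_Vf.1 hv with rfl | rfl | ⟨i, rfl⟩
  · rw [lc_zero]; norm_num
  · rw [lc_tv_Wb hd hne]
  · rw [lc_ee]; split_ifs <;> linarith

lemma isExposed_Wb (hd : 2 ≤ d) {j0 j1 : Fin d} (hne : j0 ≠ j1) :
    IsExposed ℝ (convexHull ℝ ((Vf d : Finset (Eu d)) : Set (Eu d)))
      (convexHull ℝ ((WbF d j0 j1 : Finset (Eu d)) : Set (Eu d))) := by
  have h := isExposed_argmax (Vf d) (lc (fun i => if i = j0 ∨ i = j1 then 1 - (d:ℝ)/4 else 1)) 1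
    (bound_Wb hd hne) ⟨tv d, tv_mem_Vf, lc_tv_Wb hd hne⟩
  rwa [filter_Wb hd hne] at h

abbrev QQ (d : ℕ) : Set (Eu d) := convexHull ℝ ((Vf d : Finset (Eu d)) : Set (Eu d))

lemma sdim_hull_card {W : Finset (Eu d)} (hne : W.Nonempty)
    (haff : AffineIndependent ℝ (fun x => x : ((W : Set (Eu d))) → Eu d)) :
    sdim (convexHull ℝ (W : Set (Eu d))) = W.card - 1 :=
  finrank_hull_affIndep W hne haff

lemma sdim_QQ (hd : 2 ≤ d) : sdim (QQ d) = d := finrank_Q hd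

lemma faceDim_W (hd : 2 ≤ d) {W : Finset (Eu d)}
    (hexp : IsExposed ℝ (QQ d) (convexHull ℝ (W : Set (Eu d)))) (hcard : W.card = d - 1)
    (haff : AffineIndependent ℝ (fun x => x : ((W : Set (Eu d))) → Eu d)) :
    IsFaceDim (QQ d) (convexHull ℝ (W : Set (Eu d))) (d - 2) := by
  have hne : W.Nonempty := Finset.card_pos.1 (by omega)
  obtain ⟨x, hx⟩ := hne
  refine ⟨hexp, ⟨x, subset_convexHull ℝ _ hx⟩, ?_⟩
  rw [sdim_hull_card ⟨x, hx⟩ haff, hcard]; omega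

lemma face_case (hd : 2 ≤ d) {F : Set (Eu d)} {k : ℕ} (hF : IsFaceDim (QQ d) F k)
    (hk : k < d) :
    ∃ W : Finset (Eu d), F = convexHull ℝ (W : Set (Eu d)) ∧ W.card = k + 1 ∧ W ⊆ Vf d ∧
      ((∃ j, (W : Set (Eu d)) ⊆ M0 d j) ∨ (∃ j, (W : Set (Eu d)) ⊆ Mt d j)) := by
  classical
  obtain ⟨hexp, hne, hdim⟩ := hF
  obtain ⟨l, M, hb, hFeq⟩ := exposed_eq_argmax (Vf d) hexp hne
  set W := (Vf d).filter (fun v => l v = M) with hW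
  have hWne : W.Nonempty := by
    rcases hne with ⟨x, hx⟩
    rw [hFeq] at hx
    rcases W.eq_empty_or_nonempty with h | h
    · rw [h] at hx; simp at hx
    · exact h
  have hproper : W ≠ Vf d := by
    intro h
    rw [h] at hFeq
    rw [hFeq] at hdim
    rw [sdim_QQ hd] at hdim
    omega
  have hcases := argmax_classify hd l M hb hproper
  have haff : AffineIndependent ℝ (fun x => x : ((W : Set (Eu d))) → Eu d) := by
    rcases hcases with ⟨j, hsub⟩ | ⟨j, hsub⟩
    · exact affIndep_of_sub_M0 hsub
    · exact affIndep_of_sub_Mt hd hsub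
  have hcard : W.card = k + 1 := by
    have h1 : sdim F = W.card - 1 := by rw [hFeq]; exact sdim_hull_card hWne haff
    have h2 := hWne.card_pos
    omega
  exact ⟨W, hFeq, hcard, Finset.filter_subset _ _, hcases⟩

abbrev Nd (d : ℕ) := {F : Set (Eu d) // IsFaceDim (QQ d) F (d - 2)}

def nodeSj (hd : 2 ≤ d) (j : Fin d) : Nd d :=
  ⟨convexHull ℝ ((SjF d j : Finset (Eu d)) : Set (Eu d)),
    faceDim_W hd (isExposed_Sj hd j) (card_SjF hd j) (affIndep_of_sub_M0 (SjF_sub_M0 j))⟩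

def Scut (hd : 2 ≤ d) : Set (Nd d) := Set.range (nodeSj hd)

lemma nodeSj_inj (hd : 2 ≤ d) : Function.Injective (nodeSj hd) := by
  intro j k h
  by_contra hjk
  have hval : convexHull ℝ ((SjF d j : Finset (Eu d)) : Set (Eu d))
      = convexHull ℝ ((SjF d k : Finset (Eu d)) : Set (Eu d)) := congrArg Subtype.val h
  have hjmem : ee d j ∈ convexHull ℝ ((SjF d k : Finset (Eu d)) : Set (Eu d)) :=
    subset_convexHull ℝ _ (Finset.mem_coe.2 (mem_SjF.2 ⟨j, fun hh => hjk hh, rfl⟩))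
  rw [← hval] at hjmem
  exact eej_not_mem_hull_M0 j (convexHull_mono (SjF_sub_M0 j) hjmem)

lemma mem_Scut (hd : 2 ≤ d) {u : Nd d} :
    u ∈ Scut hd ↔ ∃ j, u.val = convexHull ℝ ((SjF d j : Finset (Eu d)) : Set (Eu d)) := by
  constructor
  · rintro ⟨j, rfl⟩; exact ⟨j, rfl⟩
  · rintro ⟨j, hj⟩
    exact ⟨j, Subtype.ext hj.symm⟩

lemma edge_inv (hd : 2 ≤ d) {u v : Nd d} (hu : u ∉ Scut hd) (hv : v ∉ Scut hd)
    (hadj : (faceGraph (QQ d) (d - 2)).Adj u v) :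
    ((0:Eu d) ∈ u.val ↔ (0:Eu d) ∈ v.val) := by
  rw [faceGraph, SimpleGraph.fromRel_adj] at hadj
  obtain ⟨hneuv, hrel⟩ := hadj
  obtain ⟨G, hG, hsubu, hsubv⟩ : ∃ G, IsFaceDim (QQ d) G (d - 2 + 1) ∧ u.val ⊆ G ∧ v.val ⊆ G := by
    rcases hrel with ⟨G, hG, h1, h2⟩ | ⟨G, hG, h1, h2⟩
    exacts [⟨G, hG, h1, h2⟩, ⟨G, hG, h2, h1⟩]
  obtain ⟨WG, hGeq, hWGcard, hWGVf, hWGcases⟩ := face_case hd hG (by omega)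
  rcases hWGcases with ⟨j, hsub⟩ | ⟨j, hsub⟩
  · have key : ∀ w : Nd d, w ∉ Scut hd → w.val ⊆ G → (0:Eu d) ∈ w.val := by
      intro w hwS hwG
      obtain ⟨Ww, hweq, hwcard, hwVf, -⟩ := face_case hd w.2 (by omega)
      have hWwM0 : (Ww : Set (Eu d)) ⊆ M0 d j := by
        intro x hx
        refine mem_M0_of_mem_hull hd (hwVf hx) ?_
        have hxw : x ∈ w.val := hweq ▸ subset_convexHull ℝ _ hx
        have hxG := hwG hxw
        rw [hGeq] at hxG
        exact convexHull_mono hsub hxG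
      by_cases h0 : (0:Eu d) ∈ Ww
      · rw [hweq]; exact subset_convexHull ℝ _ h0
      · exfalso
        apply hwS
        rw [mem_Scut hd]
        refine ⟨j, ?_⟩
        have hsubSj : Ww ⊆ SjF d j := by
          intro x hx
          rcases hWwM0 (Finset.mem_coe.2 hx) with rfl | ⟨i, hij, rfl⟩
          · exact absurd hx h0
          · exact mem_SjF.2 ⟨i, hij, rfl⟩
        have hWeq : Ww = SjF d j := Finset.eq_of_subset_of_card_le hsubSj
          (by rw [card_SjF hd j]; omega)
        rw [hweq, hWeq]
    exact iff_of_true (key u hu hsubu) (key v hv hsubv)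
  · have key : ∀ w : Nd d, w.val ⊆ G → (0:Eu d) ∉ w.val := by
      intro w hwG h0
      have hxG := hwG h0
      rw [hGeq] at hxG
      exact zero_not_mem_hull_Mt hd j (convexHull_mono hsub hxG)
    exact iff_of_false (key u hsubu) (key v hsubv)

lemma reach_inv (hd : 2 ≤ d) {u v : {x : Nd d // x ∈ (Scut hd)ᶜ}}
    (h : ((faceGraph (QQ d) (d - 2)).induce (Scut hd)ᶜ).Reachable u v) :
    ((0:Eu d) ∈ u.val.val ↔ (0:Eu d) ∈ v.val.val) := by
  obtain ⟨p⟩ := h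
  induction p with
  | nil => exact Iff.rfl
  | @cons a b c hadj q ih =>
    exact (edge_inv hd a.2 b.2 hadj).trans ih

lemma zero_mem_hull_WaF (hd : 2 ≤ d) {j0 j1 : Fin d} :
    (0 : Eu d) ∈ convexHull ℝ ((WaF d j0 j1 : Finset (Eu d)) : Set (Eu d)) :=
  subset_convexHull ℝ _ (Finset.mem_coe.2 (Finset.mem_insert_self _ _))

lemma tv_mem_hull_WbF (hd : 2 ≤ d) {j0 j1 : Fin d} :
    tv d ∈ convexHull ℝ ((WbF d j0 j1 : Finset (Eu d)) : Set (Eu d)) :=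
  subset_convexHull ℝ _ (Finset.mem_coe.2 (Finset.mem_insert_self _ _))

lemma zero_not_mem_hull_WbF (hd : 2 ≤ d) {j0 j1 : Fin d} :
    (0 : Eu d) ∉ convexHull ℝ ((WbF d j0 j1 : Finset (Eu d)) : Set (Eu d)) := fun h =>
  zero_not_mem_hull_Mt hd j0 (convexHull_mono WbF_sub_Mt h)

end StmtAux

/-- For every `d ≥ 2` there is a `d`-dimensional convex polytope `Q` (the prism
over a `(d-1)`-dimensional simplex) such that `G_{d-2}(Q)` is not
`(d+1)`-vertex-connected: there is a set of `d` nodes whose deletion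
disconnects the graph. -/
theorem stmt_2 (d : ℕ) (hd : 2 ≤ d) :
    ∃ (N : ℕ) (Q : Set (EuclideanSpace ℝ (Fin N))), IsPolytope Q ∧ sdim Q = d ∧
      (∃ S : Set {F : Set (EuclideanSpace ℝ (Fin N)) // IsFaceDim Q F (d - 2)},
        S.Finite ∧ S.ncard = d ∧ ¬ ((faceGraph Q (d - 2)).induce Sᶜ).Connected) ∧
      ¬ MConnected (faceGraph Q (d - 2)) (d + 1) := by
  classical
  have hj01 : (⟨0, by omega⟩ : Fin d) ≠ ⟨1, by omega⟩ := by simp [Fin.ext_iff]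
  set j0 : Fin d := ⟨0, by omega⟩
  set j1 : Fin d := ⟨1, by omega⟩
  -- the two distinguished faces
  let nodeA : Nd d := ⟨convexHull ℝ ((WaF d j0 j1 : Finset (Eu d)) : Set (Eu d)),
    faceDim_W hd (isExposed_Wa hd hj01) (card_WaF hd hj01) (affIndep_of_sub_M0 WaF_sub_M0)⟩
  let nodeB : Nd d := ⟨convexHull ℝ ((WbF d j0 j1 : Finset (Eu d)) : Set (Eu d)),
    faceDim_W hd (isExposed_Wb hd hj01) (card_WbF hd hj01) (affIndep_of_sub_Mt hd WbF_sub_Mt)⟩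
  have hAS : nodeA ∉ Scut hd := by
    rw [mem_Scut hd]
    rintro ⟨j, hj⟩
    have h0 : (0 : Eu d) ∈ nodeA.val := zero_mem_hull_WaF hd
    rw [hj] at h0
    exact zero_not_mem_hull_Mt hd j (convexHull_mono (SjF_sub_Mt j) h0)
  have hBS : nodeB ∉ Scut hd := by
    rw [mem_Scut hd]
    rintro ⟨j, hj⟩
    have h0 : tv d ∈ nodeB.val := tv_mem_hull_WbF hd
    rw [hj] at h0
    exact tv_not_mem_hull_M0 hd j (convexHull_mono (SjF_sub_M0 j) h0)
  have hfin : (Scut hd).Finite := Set.finite_range _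
  have hncard : (Scut hd).ncard = d := by
    rw [Scut, ← Set.image_univ, Set.ncard_image_of_injective _ (nodeSj_inj hd),
      Set.ncard_univ]
    simp
  have hnotcon : ¬ ((faceGraph (QQ d) (d - 2)).induce (Scut hd)ᶜ).Connected := by
    intro hcon
    have hreach := hcon.preconnected ⟨nodeA, hAS⟩ ⟨nodeB, hBS⟩
    have hiff := reach_inv hd hreach
    have h0A : (0 : Eu d) ∈ nodeA.val := zero_mem_hull_WaF hd
    exact zero_not_mem_hull_WbF hd (hiff.1 h0A)
  refine ⟨d, QQ d, ⟨((Vf d : Finset (Eu d)) : Set (Eu d)), (Vf d).finite_toSet, rfl⟩,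
    sdim_QQ hd, ⟨Scut hd, hfin, hncard, hnotcon⟩, ?_⟩
  rintro ⟨-, h2⟩
  exact hnotcon (h2 (Scut hd) hfin (by rw [hncard]; omega))
end

section
/- Let d and k be integers with 0 ≤ k ≤ d-1 and let P be a d-dimensional simplex (the convex hull of d+1 affinely independent points). Then every k-dimensional face of P has exactly (k+1)(d-k) neighbors in the graph G_k(P); consequently G_k(P) is not m-connected for any m > (k+1)(d-k). -/
open Set

attribute [local instance] Classical.propDecidable

variable {N : ℕ}

local notation "E" => EuclideanSpace ℝ (Fin N)

-- membership lemma
lemma aux_mem_of_mem_convexHull {S T : Finset E}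
    (hind : AffineIndependent ℝ (fun x : S => (x : E))) (hT : T ⊆ S)
    {s : E} (hs : s ∈ S) (h : s ∈ convexHull ℝ (T : Set E)) : s ∈ T := by
  classical
  have h2 := AffineIndependent.convexHull_inter (s := S) (t₁ := {s}) (t₂ := T)
    hind (by simpa using hs) hT
  have hmem : s ∈ convexHull ℝ (({s} ∩ T : Finset E) : Set E) := by
    rw [Finset.coe_inter, h2]
    exact ⟨subset_convexHull ℝ _ (by simp), h⟩
  by_contra hsT
  rw [Finset.singleton_inter_of_notMem hsT] at hmem
  simpa using hmem

lemma aux_convexHull_subset_iff {S T U : Finset E}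
    (hind : AffineIndependent ℝ (fun x : S => (x : E))) (hT : T ⊆ S) (hU : U ⊆ S) :
    convexHull ℝ (T : Set E) ⊆ convexHull ℝ (U : Set E) ↔ T ⊆ U := by
  constructor
  · intro h t ht
    exact aux_mem_of_mem_convexHull hind hU (hT ht)
      (h (subset_convexHull ℝ _ (by exact_mod_cast ht)))
  · intro h
    exact convexHull_mono (by exact_mod_cast h)

lemma aux_convexHull_inj {S T U : Finset E}
    (hind : AffineIndependent ℝ (fun x : S => (x : E))) (hT : T ⊆ S) (hU : U ⊆ S)
    (h : convexHull ℝ (T : Set E) = convexHull ℝ (U : Set E)) : T = U := by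
  apply Finset.Subset.antisymm
  · exact (aux_convexHull_subset_iff hind hT hU).1 h.le
  · exact (aux_convexHull_subset_iff hind hU hT).1 h.ge

lemma aux_sdim {S T : Finset E}
    (hind : AffineIndependent ℝ (fun x : S => (x : E))) (hT : T ⊆ S) {n : ℕ}
    (hc : T.card = n + 1) : sdim (convexHull ℝ (T : Set E)) = n := by
  have hindT : AffineIndependent ℝ (fun x : T => (x : E)) :=
    AffineIndependent.mono (s := (T : Set E)) (t := (S : Set E)) hind (by exact_mod_cast hT)
  unfold sdim
  rw [affineSpan_convexHull, direction_affineSpan]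
  have := hindT.finrank_vectorSpan (n := n) (by simpa using hc)
  rwa [Subtype.range_coe_subtype, (by ext x; simp : {x | x ∈ T} = (T : Set E))] at this
lemma aux_affineMap_sum_apply {ι : Type*} (s : Finset ι) (g : ι → (E →ᵃ[ℝ] ℝ)) (x : E) :
    (∑ i ∈ s, g i) x = ∑ i ∈ s, g i x := by
  classical
  induction s using Finset.induction_on with
  | empty => simp
  | insert _ _ h ih =>
      rw [Finset.sum_insert h, Finset.sum_insert h, AffineMap.coe_add, Pi.add_apply, ih]

lemma aux_affine_apply {S : Finset E} {w : E → ℝ} (hw1 : ∑ y ∈ S, w y = 1) (f : E →ᵃ[ℝ] ℝ) :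
    f (S.centerMass w id) = ∑ y ∈ S, w y * f y := by
  rw [← affineCombination_eq_centerMass hw1, Finset.map_affineCombination _ _ _ hw1,
    Finset.affineCombination_eq_linear_combination _ _ _ hw1]
  simp [smul_eq_mul, Function.comp]

lemma aux_support_mem {S T : Finset E} (hT : T ⊆ S) {w : E → ℝ}
    (hw0 : ∀ y ∈ S, 0 ≤ w y) (hw1 : ∑ y ∈ S, w y = 1)
    (hsupp : ∀ y ∈ S, w y ≠ 0 → y ∈ T) :
    S.centerMass w id ∈ convexHull ℝ (T : Set E) := by
  classical
  rw [← Finset.centerMass_filter_ne_zero (z := id)]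
  apply Finset.centerMass_mem_convexHull
  · exact fun i hi => hw0 i (Finset.mem_of_mem_filter i hi)
  · rw [Finset.sum_filter_ne_zero, hw1]; norm_num
  · intro i hi
    rw [Finset.mem_filter] at hi
    exact Finset.mem_coe.2 (hsupp i hi.1 hi.2)

lemma aux_exists_affineMap {S T : Finset E}
    (hind : AffineIndependent ℝ (fun x : S => (x : E))) (hT : T ⊆ S) :
    ∃ f : E →ᵃ[ℝ] ℝ, (∀ s ∈ T, f s = 0) ∧ (∀ s ∈ S, s ∉ T → f s = 1) := by
  classical
  obtain ⟨t, hSt, hindt, htop⟩ :=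
    exists_subset_affineIndependent_affineSpan_eq_top (s := (S : Set E)) hind
  let b : AffineBasis t ℝ E := ⟨fun x => (x : E), hindt, by rw [Subtype.range_coe]; exact htop⟩
  have hmem : ∀ x, x ∈ S \ T → x ∈ t := fun x hx =>
    hSt (Finset.mem_coe.2 (Finset.mem_sdiff.1 hx).1)
  refine ⟨∑ x ∈ (S \ T).attach, b.coord ⟨x.1, hmem x.1 x.2⟩, ?_, ?_⟩
  all_goals intro s hs
  · have hst : (s : E) ∈ t := hSt (Finset.mem_coe.2 (hT hs))
    rw [aux_affineMap_sum_apply]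
    apply Finset.sum_eq_zero
    intro x _
    have : b.coord ⟨x.1, hmem x.1 x.2⟩ (b ⟨s, hst⟩) = 0 := by
      rw [AffineBasis.coord_apply, if_neg]
      intro hcontra
      have : x.1 = s := congrArg Subtype.val hcontra
      exact (Finset.mem_sdiff.1 x.2).2 (this ▸ hs)
    exact this
  · intro hsT
    have hst : (s : E) ∈ t := hSt (Finset.mem_coe.2 hs)
    rw [aux_affineMap_sum_apply]
    have key : ∀ x ∈ (S \ T).attach, b.coord ⟨x.1, hmem x.1 x.2⟩ s
        = if x.1 = s then 1 else 0 := by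
      intro x _
      have : b.coord ⟨x.1, hmem x.1 x.2⟩ (b ⟨s, hst⟩) = if x.1 = s then 1 else 0 := by
        rw [AffineBasis.coord_apply]
        congr 1
        simp [Subtype.ext_iff]
      exact this
    rw [Finset.sum_congr rfl key, Finset.sum_attach (S \ T) (fun y => if y = s then (1:ℝ) else 0),
      Finset.sum_ite_eq' (S \ T) s (fun _ => (1:ℝ)), if_pos (Finset.mem_sdiff.2 ⟨hs, hsT⟩)]
lemma aux_exposed {S T : Finset E}
    (hind : AffineIndependent ℝ (fun x : S => (x : E))) (hT : T ⊆ S) :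
    IsExposed ℝ (convexHull ℝ (S : Set E)) (convexHull ℝ (T : Set E)) := by
  classical
  intro hne
  obtain ⟨t0, ht0⟩ : T.Nonempty := by
    rcases T.eq_empty_or_nonempty with h | h
    · subst h; simp at hne
    · exact h
  obtain ⟨f, hf0, hf1⟩ := aux_exists_affineMap hind hT
  set l : E →L[ℝ] ℝ := LinearMap.toContinuousLinearMap (-f.linear) with hl
  have hdec : ∀ x : E, f x = f.linear x + f 0 := fun x => congrFun (AffineMap.decomp f) x
  have hlin : ∀ x y : E, (l y ≤ l x ↔ f x ≤ f y) := by
    intro x y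
    have h1 : l y = -f.linear y := by
      rw [hl]; simp
    have h2 : l x = -f.linear x := by
      rw [hl]; simp
    rw [h1, h2, hdec x, hdec y]
    constructor <;> intro h <;> linarith
  have hfT : ∀ x ∈ convexHull ℝ (T : Set E), f x = 0 := by
    intro x hx
    have hsub : convexHull ℝ (T : Set E) ⊆ f ⁻¹' {0} :=
      convexHull_min (fun s hs => hf0 s (Finset.mem_coe.1 hs))
        ((convex_singleton (0:ℝ)).affine_preimage f)
    exact hsub hx
  have hfS : ∀ y ∈ convexHull ℝ (S : Set E), 0 ≤ f y := by
    intro y hy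
    have hsub : convexHull ℝ (S : Set E) ⊆ f ⁻¹' (Set.Ici 0) := by
      apply convexHull_min _ ((convex_Ici (0:ℝ)).affine_preimage f)
      intro s hs
      by_cases hsT : s ∈ T
      · simp [Set.mem_preimage, hf0 s hsT]
      · simp [Set.mem_preimage, hf1 s (Finset.mem_coe.1 hs) hsT]
    exact hsub hy
  refine ⟨l, ?_⟩
  ext x
  constructor
  · intro hx
    refine ⟨convexHull_mono (Finset.coe_subset.2 hT) hx, fun y hy => ?_⟩
    rw [hlin x y, hfT x hx]
    exact hfS y hy
  · rintro ⟨hxP, hmax⟩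
    have ht0P : (t0 : E) ∈ convexHull ℝ (S : Set E) :=
      subset_convexHull ℝ _ (Finset.mem_coe.2 (hT ht0))
    have hfx : f x = 0 := by
      have h1 : f x ≤ f t0 := (hlin x t0).1 (hmax t0 ht0P)
      have h2 : f t0 = 0 := hf0 t0 ht0
      have h3 : 0 ≤ f x := hfS x hxP
      linarith
    obtain ⟨w, hw0, hw1, hx_eq⟩ := (Finset.mem_convexHull (R := ℝ)).1 hxP
    have hsum : ∑ y ∈ S, w y * f y = 0 := by
      rw [← aux_affine_apply hw1 f, hx_eq, hfx]
    have hterm : ∀ y ∈ S, w y * f y = 0 := by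
      intro y hy
      have := (Finset.sum_eq_zero_iff_of_nonneg (fun y hy =>
        mul_nonneg (hw0 y hy) (hfS y (subset_convexHull ℝ _ (Finset.mem_coe.2 hy))))).1 hsum
      exact this y hy
    rw [← hx_eq]
    apply aux_support_mem hT hw0 hw1
    intro y hy hwy
    by_contra hyT
    have : w y * f y = w y := by rw [hf1 y hy hyT, mul_one]
    rw [hterm y hy] at this
    exact hwy this.symm

lemma aux_face_classify {S : Finset E} {F : Set E}
    (hexp : IsExposed ℝ (convexHull ℝ (S : Set E)) F) (hne : F.Nonempty) :
    ∃ T : Finset E, T ⊆ S ∧ F = convexHull ℝ (T : Set E) := by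
  classical
  obtain ⟨l, rfl⟩ := hexp hne
  set P := convexHull ℝ (S : Set E) with hP
  set T := S.filter (fun s => ∀ y ∈ P, l y ≤ l s) with hTdef
  refine ⟨T, Finset.filter_subset _ _, ?_⟩
  have hSP : ∀ y ∈ S, y ∈ P := fun y hy => subset_convexHull ℝ _ (Finset.mem_coe.2 hy)
  apply Set.Subset.antisymm
  · rintro x ⟨hxP, hmax⟩
    obtain ⟨w, hw0, hw1, hx_eq⟩ := (Finset.mem_convexHull (R := ℝ)).1 hxP
    have hxl : l x = ∑ y ∈ S, w y * l y := by
      rw [← hx_eq]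
      exact aux_affine_apply hw1 l.toLinearMap.toAffineMap
    have hsum : ∑ y ∈ S, w y * (l x - l y) = 0 := by
      have : ∑ y ∈ S, w y * (l x - l y) = (∑ y ∈ S, w y) * l x - ∑ y ∈ S, w y * l y := by
        rw [Finset.sum_mul]
        rw [← Finset.sum_sub_distrib]
        congr 1; ext y; ring
      rw [this, hw1, one_mul, ← hxl, sub_self]
    have hterm : ∀ y ∈ S, w y * (l x - l y) = 0 := by
      intro y hy
      exact (Finset.sum_eq_zero_iff_of_nonneg (fun y hy =>
        mul_nonneg (hw0 y hy) (by linarith [hmax y (hSP y hy)]))).1 hsum y hy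
    rw [← hx_eq]
    apply aux_support_mem (Finset.filter_subset _ _) hw0 hw1
    intro y hy hwy
    rw [Finset.mem_filter]
    refine ⟨hy, fun z hz => ?_⟩
    have h1 : l x - l y = 0 := by
      have := hterm y hy
      rcases mul_eq_zero.1 this with h | h
      · exact absurd h hwy
      · exact h
    have : l y = l x := by linarith
    rw [this]
    exact hmax z hz
  · have hconv : Convex ℝ {x ∈ P | ∀ y ∈ P, l y ≤ l x} := by
      have h2 : Convex ℝ {x : E | ∀ y ∈ P, l y ≤ l x} := by
        intro x1 hx1 x2 hx2 a b ha hb hab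
        intro y hy
        have e1 : l (a • x1 + b • x2) = a * l x1 + b * l x2 := by
          simp [map_add, map_smul, smul_eq_mul]
        have e2 : l y = a * l y + b * l y := by rw [← add_mul, hab, one_mul]
        rw [Set.mem_setOf_eq] at hx1 hx2
        have := hx1 y hy
        have := hx2 y hy
        rw [e1, e2]
        apply add_le_add
        · exact mul_le_mul_of_nonneg_left (hx1 y hy) ha
        · exact mul_le_mul_of_nonneg_left (hx2 y hy) hb
      exact (convex_convexHull ℝ _).inter h2
    apply convexHull_min _ hconv
    intro s hs
    rw [hTdef] at hs
    have hs' := Finset.mem_filter.1 (Finset.mem_coe.1 hs)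
    exact ⟨hSP s hs'.1, hs'.2⟩
lemma aux_isFaceDim_iff {S : Finset E}
    (hind : AffineIndependent ℝ (fun x : S => (x : E))) {F : Set E} {k : ℕ} :
    IsFaceDim (convexHull ℝ (S : Set E)) F k ↔
      ∃ T : Finset E, T ⊆ S ∧ T.card = k + 1 ∧ F = convexHull ℝ (T : Set E) := by
  constructor
  · rintro ⟨hexp, hne, hdim⟩
    obtain ⟨T, hTS, rfl⟩ := aux_face_classify hexp hne
    have hTne : T.Nonempty := by
      rcases T.eq_empty_or_nonempty with h | h
      · subst h; simp at hne
      · exact h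
    obtain ⟨n, hn⟩ : ∃ n, T.card = n + 1 :=
      ⟨T.card - 1, (Nat.succ_pred_eq_of_pos (Finset.card_pos.2 hTne)).symm⟩
    have hd := aux_sdim hind hTS hn
    rw [hdim] at hd
    exact ⟨T, hTS, by omega, rfl⟩
  · rintro ⟨T, hTS, hTc, rfl⟩
    have hTne : T.Nonempty := Finset.card_pos.1 (by omega)
    exact ⟨aux_exposed hind hTS,
      ⟨hTne.choose, subset_convexHull ℝ _ (Finset.mem_coe.2 hTne.choose_spec)⟩,
      aux_sdim hind hTS hTc⟩

lemma aux_adj_iff {S : Finset E}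
    (hind : AffineIndependent ℝ (fun x : S => (x : E))) {k : ℕ} {T T' : Finset E}
    (hT : T ⊆ S) (hT' : T' ⊆ S) (hTc : T.card = k + 1) (hT'c : T'.card = k + 1)
    (F F' : {F : Set E // IsFaceDim (convexHull ℝ (S : Set E)) F k})
    (hF : F.1 = convexHull ℝ (T : Set E)) (hF' : F'.1 = convexHull ℝ (T' : Set E)) :
    (faceGraph (convexHull ℝ (S : Set E)) k).Adj F F' ↔
      (T ≠ T' ∧ (T ∪ T').card = k + 2) := by
  classical
  simp only [faceGraph, SimpleGraph.fromRel_adj]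
  have key : ∀ A B : Finset E, A ⊆ S → B ⊆ S → A.card = k + 1 → B.card = k + 1 →
      (∃ G, IsFaceDim (convexHull ℝ (S : Set E)) G (k + 1) ∧
        convexHull ℝ (A : Set E) ⊆ G ∧ convexHull ℝ (B : Set E) ⊆ G) →
      A ≠ B → (A ∪ B).card = k + 2 := by
    intro A B hA hB hAc hBc ⟨G, hG, h1, h2⟩ hAB
    obtain ⟨U, hUS, hUc, rfl⟩ := (aux_isFaceDim_iff hind).1 hG
    have hAU : A ⊆ U := (aux_convexHull_subset_iff hind hA hUS).1 h1
    have hBU : B ⊆ U := (aux_convexHull_subset_iff hind hB hUS).1 h2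
    have hle : (A ∪ B).card ≤ k + 2 := by
      calc (A ∪ B).card ≤ U.card := Finset.card_le_card (Finset.union_subset hAU hBU)
      _ = k + 2 := hUc
    have hge : k + 2 ≤ (A ∪ B).card := by
      by_contra hcon
      have h3 : (A ∪ B).card ≤ A.card := by omega
      have h4 : A = A ∪ B := Finset.eq_of_subset_of_card_le Finset.subset_union_left h3
      have h5 : B ⊆ A := by rw [h4]; exact Finset.subset_union_right
      exact hAB (Finset.eq_of_subset_of_card_le h5 (by omega)).symm
    omega
  constructor
  · rintro ⟨hne, h | h⟩
    · have hTT' : T ≠ T' := fun h' => hne (Subtype.ext (by rw [hF, hF', h']))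
      exact ⟨hTT', key T T' hT hT' hTc hT'c (by rwa [hF, hF'] at h) hTT'⟩
    · have hTT' : T ≠ T' := fun h' => hne (Subtype.ext (by rw [hF, hF', h']))
      refine ⟨hTT', ?_⟩
      rw [Finset.union_comm]
      exact key T' T hT' hT hT'c hTc (by rwa [hF, hF'] at h) hTT'.symm
  · rintro ⟨hne, hcard⟩
    refine ⟨fun h => hne (aux_convexHull_inj hind hT hT' (by rw [← hF, ← hF']; exact congrArg Subtype.val h)),
      Or.inl ⟨convexHull ℝ ((T ∪ T' : Finset E) : Set E), ?_, ?_, ?_⟩⟩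
    · exact (aux_isFaceDim_iff hind).2 ⟨T ∪ T', Finset.union_subset hT hT', hcard, rfl⟩
    · rw [hF]; exact convexHull_mono (by exact_mod_cast Finset.subset_union_left)
    · rw [hF']; exact convexHull_mono (by exact_mod_cast Finset.subset_union_right)

lemma aux_count {α : Type*} [DecidableEq α] {S T : Finset α} (hTS : T ⊆ S) {k d : ℕ}
    (hTc : T.card = k + 1) (hS : S.card = d + 1) :
    (S.powerset.filter (fun T' => T'.card = k + 1 ∧ T ≠ T' ∧ (T ∪ T').card = k + 2)).card
      = (k + 1) * (d - k) := by
  have hbij := Finset.card_bij (s := T ×ˢ (S \ T))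
    (t := S.powerset.filter (fun T' => T'.card = k + 1 ∧ T ≠ T' ∧ (T ∪ T').card = k + 2))
    (i := fun p _ => insert p.2 (T.erase p.1))
    (by
      rintro ⟨a, b⟩ hab
      rw [Finset.mem_product] at hab
      obtain ⟨ha, hb⟩ := hab
      rw [Finset.mem_sdiff] at hb
      have hbT : b ∉ T.erase a := fun h => hb.2 (Finset.mem_of_mem_erase h)
      rw [Finset.mem_filter, Finset.mem_powerset]
      refine ⟨?_, ?_, ?_, ?_⟩
      · intro x hx
        rcases Finset.mem_insert.1 hx with rfl | hx
        · exact hb.1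
        · exact hTS (Finset.mem_of_mem_erase hx)
      · rw [Finset.card_insert_of_notMem hbT, Finset.card_erase_of_mem ha, hTc]
        omega
      · intro h
        exact hb.2 (h ▸ Finset.mem_insert_self b _)
      · have : T ∪ insert b (T.erase a) = insert b T := by
          rw [Finset.union_insert, Finset.union_eq_left.2 (Finset.erase_subset a T)]
        rw [this, Finset.card_insert_of_notMem hb.2, hTc])
    (by
      rintro ⟨a₁, b₁⟩ h₁ ⟨a₂, b₂⟩ h₂ heq
      rw [Finset.mem_product, Finset.mem_sdiff] at h₁ h₂
      have heq' : insert b₁ (T.erase a₁) = insert b₂ (T.erase a₂) := heq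
      have hb₁ : b₁ = b₂ := by
        have : b₁ ∈ insert b₂ (T.erase a₂) := heq' ▸ Finset.mem_insert_self b₁ _
        rcases Finset.mem_insert.1 this with h | h
        · exact h
        · exact absurd (Finset.mem_of_mem_erase h) h₁.2.2
      have ha₁ : a₂ = a₁ := by
        by_contra hcon
        have hmem2 : a₂ ∈ insert b₁ (T.erase a₁) := by
          exact Finset.mem_insert_of_mem (Finset.mem_erase.2 ⟨hcon, h₂.1⟩)
        rw [heq'] at hmem2
        rcases Finset.mem_insert.1 hmem2 with h | h
        · rw [hb₁] at h₁; exact h₁.2.2 (h ▸ h₂.1)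
        · exact (Finset.mem_erase.1 h).1 rfl
      rw [Prod.mk.injEq]
      exact ⟨ha₁.symm, hb₁⟩)
    (by
      intro T' hT'
      rw [Finset.mem_filter, Finset.mem_powerset] at hT'
      obtain ⟨hT'S, hT'c, hTne, hTuc⟩ := hT'
      have hint : (T ∩ T').card = k := by
        have := Finset.card_union_add_card_inter T T'
        omega
      obtain ⟨a, ha⟩ : (T \ T').Nonempty := by
        rw [Finset.sdiff_nonempty]
        intro hsub
        exact hTne (Finset.eq_of_subset_of_card_le hsub (by omega))
      obtain ⟨b, hbmem⟩ : (T' \ T).Nonempty := by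
        rw [Finset.sdiff_nonempty]
        intro hsub
        exact hTne (Finset.eq_of_subset_of_card_le hsub (by omega)).symm
      rw [Finset.mem_sdiff] at ha hbmem
      have herase : T.erase a = T ∩ T' := by
        symm
        apply Finset.eq_of_subset_of_card_le
        · intro x hx
          rw [Finset.mem_inter] at hx
          exact Finset.mem_erase.2 ⟨fun h => ha.2 (h ▸ hx.2), hx.1⟩
        · rw [Finset.card_erase_of_mem ha.1, hTc, hint]
          omega
      refine ⟨(a, b), ?_, ?_⟩
      · rw [Finset.mem_product, Finset.mem_sdiff]
        exact ⟨ha.1, hT'S hbmem.1, hbmem.2⟩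
      · apply Finset.eq_of_subset_of_card_le
        · intro x hx
          rcases Finset.mem_insert.1 hx with rfl | hx
          · exact hbmem.1
          · rw [herase] at hx
            exact (Finset.mem_inter.1 hx).2
        · rw [Finset.card_insert_of_notMem (fun h => hbmem.2 (Finset.mem_of_mem_erase h)),
            Finset.card_erase_of_mem ha.1, hTc, hT'c]
          omega)
  rw [← hbij, Finset.card_product, Finset.card_sdiff_of_subset hTS, hTc, hS]
  congr 1
  omega
lemma aux_degree {S : Finset E}
    (hind : AffineIndependent ℝ (fun x : S => (x : E))) {k d : ℕ} (hS : S.card = d + 1)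
    (F : {F : Set E // IsFaceDim (convexHull ℝ (S : Set E)) F k}) :
    ((faceGraph (convexHull ℝ (S : Set E)) k).neighborSet F).ncard = (k + 1) * (d - k) := by
  classical
  obtain ⟨T, hTS, hTc, hFT⟩ := (aux_isFaceDim_iff hind).1 F.2
  set NB := S.powerset.filter (fun T' => T'.card = k + 1 ∧ T ≠ T' ∧ (T ∪ T').card = k + 2)
    with hNB
  have himg : Subtype.val '' ((faceGraph (convexHull ℝ (S : Set E)) k).neighborSet F)
      = (fun T' : Finset E => convexHull ℝ (T' : Set E)) '' ↑NB := by
    ext G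
    simp only [Set.mem_image, SimpleGraph.mem_neighborSet]
    constructor
    · rintro ⟨F', hadj, rfl⟩
      obtain ⟨T', hT'S, hT'c, hF'T⟩ := (aux_isFaceDim_iff hind).1 F'.2
      have hc := (aux_adj_iff hind hTS hT'S hTc hT'c F F' hFT hF'T).1 hadj
      refine ⟨T', ?_, hF'T.symm⟩
      rw [Finset.mem_coe, hNB, Finset.mem_filter, Finset.mem_powerset]
      exact ⟨hT'S, hT'c, hc.1, hc.2⟩
    · rintro ⟨T', hT', rfl⟩
      rw [Finset.mem_coe, hNB, Finset.mem_filter, Finset.mem_powerset] at hT'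
      obtain ⟨hT'S, hT'c, hTne, hTuc⟩ := hT'
      refine ⟨⟨convexHull ℝ (T' : Set E), (aux_isFaceDim_iff hind).2 ⟨T', hT'S, hT'c, rfl⟩⟩,
        ?_, rfl⟩
      exact (aux_adj_iff hind hTS hT'S hTc hT'c F _ hFT rfl).2 ⟨hTne, hTuc⟩
  have hinj : Set.InjOn (fun T' : Finset E => convexHull ℝ (T' : Set E)) ↑NB := by
    intro A hA B hB hAB
    rw [Finset.mem_coe, hNB, Finset.mem_filter, Finset.mem_powerset] at hA hB
    exact aux_convexHull_inj hind hA.1 hB.1 hAB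
  have h1 := Set.ncard_image_of_injective
    ((faceGraph (convexHull ℝ (S : Set E)) k).neighborSet F) (Subtype.val_injective)
  rw [← h1, himg, Set.ncard_image_of_injOn hinj, Set.ncard_coe_finset]
  exact aux_count hTS hTc hS

/-- If `P` is a `d`-dimensional simplex and `0 ≤ k ≤ d-1`, then every
`k`-dimensional face of `P` has exactly `(k+1)(d-k)` neighbors in `G_k(P)`;
consequently `G_k(P)` is not `m`-connected for any `m > (k+1)(d-k)`. -/
theorem stmt_5 (d k : ℕ) (hk : k < d) {N : ℕ}
    (S : Finset (EuclideanSpace ℝ (Fin N))) (hcard : S.card = d + 1)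
    (hind : AffineIndependent ℝ (fun x : S => (x : EuclideanSpace ℝ (Fin N))))
    (P : Set (EuclideanSpace ℝ (Fin N))) (hP : P = convexHull ℝ (S : Set (EuclideanSpace ℝ (Fin N)))) :
    (∀ F : {F : Set (EuclideanSpace ℝ (Fin N)) // IsFaceDim P F k},
      ((faceGraph P k).neighborSet F).ncard = (k + 1) * (d - k)) ∧
    (∀ m : ℕ, (k + 1) * (d - k) < m → ¬ MConnected (faceGraph P k) m) := by
  classical
  subst hP
  refine ⟨fun F => aux_degree hind hcard F, ?_⟩
  intro m hm hMC
  obtain ⟨hcard', hconn⟩ := hMC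
  have hpos : 0 < Nat.card {F : Set (EuclideanSpace ℝ (Fin N)) //
      IsFaceDim (convexHull ℝ (S : Set (EuclideanSpace ℝ (Fin N)))) F k} := by omega
  obtain ⟨hne, hfin⟩ := Nat.card_pos_iff.1 hpos
  obtain ⟨F⟩ := hne
  set GK := faceGraph (convexHull ℝ (S : Set (EuclideanSpace ℝ (Fin N)))) k with hGK
  set A := GK.neighborSet F with hA
  have hAfin : A.Finite := Set.toFinite A
  have hAn : A.ncard = (k + 1) * (d - k) := aux_degree hind hcard F
  have hc := hconn A hAfin (by omega)
  have hFc : F ∈ Aᶜ := fun h => GK.irrefl h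
  have hcompl : 1 < Aᶜ.ncard := by
    have := Set.ncard_add_ncard_compl A hAfin (Set.toFinite _)
    omega
  obtain ⟨G0, hG0mem, hG0ne⟩ := Set.exists_ne_of_one_lt_ncard hcompl F
  obtain ⟨p⟩ := hc.preconnected ⟨F, hFc⟩ ⟨G0, hG0mem⟩
  cases p with
  | nil => exact hG0ne rfl
  | cons h q =>
      rename_i w
      have hadj : GK.Adj F w.1 := h
      exact w.2 hadj
end

section
/- Let P be a convex polytope of dimension d and let 0 ≤ k ≤ d-1. Then every k-dimensional face of P is contained in at least d-k faces of P of dimension k+1. -/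
open Set

-- === auxiliary development ===
open Set

section helpers
variable {E : Type*} [NormedAddCommGroup E] [InnerProductSpace ℝ E]

lemma argmax_hull_eq (T : Finset E) (l : E →L[ℝ] ℝ) (G : Set E)
    (hG : G = {x ∈ convexHull ℝ (T : Set E) | ∀ y ∈ convexHull ℝ (T : Set E), l y ≤ l x}) :
    G = convexHull ℝ ((T : Set E) ∩ G) := by
  classical
  apply Set.Subset.antisymm
  · intro x hx
    have hx' := hx
    rw [hG] at hx'
    obtain ⟨hxT, hxmax⟩ := hx'
    have hxT' := hxT
    rw [Finset.convexHull_eq] at hxT'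
    obtain ⟨w, hw0, hw1, hwc⟩ := hxT'
    have hx_eq : x = ∑ y ∈ T, w y • y := by
      rw [← hwc, Finset.centerMass_eq_of_sum_1 _ _ hw1]; rfl
    have hlx : l x = ∑ y ∈ T, w y * l y := by
      rw [hx_eq, map_sum]
      simp [smul_eq_mul]
    have hle : ∀ v ∈ T, l v ≤ l x := fun v hv =>
      hxmax v (subset_convexHull ℝ _ hv)
    have hsum0 : ∑ y ∈ T, w y * (l x - l y) = 0 := by
      have : ∑ y ∈ T, w y * (l x - l y)
          = (∑ y ∈ T, w y) * l x - ∑ y ∈ T, w y * l y := by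
        rw [Finset.sum_mul]
        rw [← Finset.sum_sub_distrib]
        congr 1; ext y; ring
      rw [this, hw1, hlx]; ring
    have hkey : ∀ v ∈ T, w v ≠ 0 → v ∈ G := by
      intro v hv hwv
      have h0 : ∀ y ∈ T, 0 ≤ w y * (l x - l y) := fun y hy =>
        mul_nonneg (hw0 y hy) (sub_nonneg.2 (hle y hy))
      have := (Finset.sum_eq_zero_iff_of_nonneg h0).1 hsum0 v hv
      have hlv : l v = l x := by
        rcases mul_eq_zero.1 this with h | h
        · exact absurd h hwv
        · linarith [sub_eq_zero.1 h]
      rw [hG]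
      exact ⟨subset_convexHull ℝ _ hv, fun y hy => hlv ▸ hxmax y hy⟩
    have hxmem : x ∈ convexHull ℝ ((T : Set E) ∩ G) := by
      rw [← Finset.centerMass_filter_ne_zero (w := w) (z := id)] at hwc
      rw [← hwc]
      apply Finset.centerMass_mem_convexHull
      · intro i hi; exact hw0 i (Finset.mem_filter.1 hi).1
      · rw [Finset.sum_filter_ne_zero, hw1]; exact one_pos
      · intro i hi
        rcases Finset.mem_filter.1 hi with ⟨hiT, hiw⟩
        exact ⟨hiT, hkey i hiT hiw⟩
    exact hxmem
  · refine convexHull_min (Set.inter_subset_right) ?_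
    rw [hG]
    intro x hx y hy a b ha hb hab
    refine ⟨(convex_convexHull ℝ (T : Set E)) hx.1 hy.1 ha hb hab, ?_⟩
    intro p hp
    have h1 := hx.2 p hp
    have h2 := hy.2 p hp
    have : l (a • x + b • y) = a * l x + b * l y := by
      simp [map_add, map_smul, smul_eq_mul]
    rw [this]
    have ha1 := mul_le_mul_of_nonneg_left h1 ha
    have hb1 := mul_le_mul_of_nonneg_left h2 hb
    have hsum : a * l p + b * l p = l p := by rw [← add_mul, hab, one_mul]
    linarith

end helpers

section helpers2
variable {E : Type*} [NormedAddCommGroup E] [InnerProductSpace ℝ E] [DecidableEq E]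
open RealInnerProductSpace

lemma exists_minimal_hull (X : Finset E) :
    ∃ X' : Finset E, X' ⊆ X ∧ convexHull ℝ (X' : Set E) = convexHull ℝ (X : Set E) ∧
      ∀ q ∈ X', q ∉ convexHull ℝ ((X'.erase q : Finset E) : Set E) := by
  classical
  induction X using Finset.strongInduction with
  | _ X ih =>
    by_cases h : ∀ q ∈ X, q ∉ convexHull ℝ ((X.erase q : Finset E) : Set E)
    · exact ⟨X, Finset.Subset.refl X, rfl, h⟩
    · push_neg at h
      obtain ⟨q, hqX, hq⟩ := h
      obtain ⟨X', h1, h2, h3⟩ := ih (X.erase q) (Finset.erase_ssubset hqX)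
      refine ⟨X', h1.trans (Finset.erase_subset q X), ?_, h3⟩
      rw [h2]
      apply Set.Subset.antisymm (convexHull_mono (by exact_mod_cast Finset.erase_subset q X))
      apply convexHull_min _ (convex_convexHull ℝ _)
      intro v hv
      by_cases hvq : v = q
      · subst hvq; exact hq
      · exact subset_convexHull ℝ _ (by
          simp only [Finset.coe_erase, Set.mem_diff, Set.mem_singleton_iff]
          exact ⟨hv, hvq⟩)

lemma exists_vertex_functional [CompleteSpace E] (Y : Finset E) (q : E) (hq : q ∈ Y)
    (hmin : q ∉ convexHull ℝ ((Y.erase q : Finset E) : Set E)) :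
    ∃ u : E, (∀ y ∈ convexHull ℝ (Y : Set E), ⟪u, y⟫ ≤ ⟪u, q⟫) ∧
      (∀ y ∈ convexHull ℝ (Y : Set E), ⟪u, y⟫ = ⟪u, q⟫ → y = q) := by
  classical
  by_cases hne : ((Y.erase q : Finset E) : Set E).Nonempty
  · obtain ⟨f, r, hfr, hrq⟩ := geometric_hahn_banach_closed_point
      (convex_convexHull ℝ ((Y.erase q : Finset E) : Set E))
      ((Set.toFinite _).isCompact_convexHull ℝ).isClosed hmin
    refine ⟨(InnerProductSpace.toDual ℝ E).symm f, ?_, ?_⟩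
    all_goals {
      have hrw : ∀ x : E, ⟪(InnerProductSpace.toDual ℝ E).symm f, x⟫ = f x := fun x =>
        InnerProductSpace.toDual_symm_apply
      have hdecomp : ∀ y ∈ convexHull ℝ (Y : Set E),
          ∃ a b : ℝ, ∃ c ∈ convexHull ℝ ((Y.erase q : Finset E) : Set E),
            0 ≤ a ∧ 0 ≤ b ∧ a + b = 1 ∧ y = a • q + b • c := by
        intro y hy
        have : (Y : Set E) = insert q ((Y.erase q : Finset E) : Set E) := by
          rw [Finset.coe_erase, Set.insert_diff_singleton, Set.insert_eq_self.2 (Finset.mem_coe.2 hq)]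
        rw [this, convexHull_insert hne] at hy
        rw [mem_convexJoin] at hy
        obtain ⟨a', ha', b', hb', hseg⟩ := hy
        rw [Set.mem_singleton_iff] at ha'
        subst ha'
        obtain ⟨a, b, ha, hb, hab, haby⟩ := hseg
        exact ⟨a, b, b', hb', ha, hb, hab, haby.symm⟩
      intro y hy
      obtain ⟨a, b, c, hc, ha, hb, hab, hy_eq⟩ := hdecomp y hy
      have hfy : f y = a * f q + b * f c := by
        rw [hy_eq]; simp [map_add, map_smul, smul_eq_mul]
      have hfc : f c < r := hfr c hc
      first
      | { -- inequality goal
          simp only [hrw]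
          have : b * f c ≤ b * f q := mul_le_mul_of_nonneg_left (by linarith) hb
          have : a * f q + b * f q = f q := by rw [← add_mul, hab, one_mul]
          nlinarith [mul_le_mul_of_nonneg_left (le_of_lt (hfc.trans hrq)) hb] }
      | { -- equality goal
          simp only [hrw]
          intro hyq
          have hb0 : b = 0 := by
            by_contra hbne
            have hbpos : 0 < b := lt_of_le_of_ne hb (Ne.symm hbne)
            have hlt := mul_lt_mul_of_pos_left (hfc.trans hrq) hbpos
            have h1 : a * f q + b * f q = f q := by rw [← add_mul, hab, one_mul]
            linarith
          have ha1 : a = 1 := by linarith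
          rw [hy_eq, hb0, ha1]; simp }
    }
  · -- Y = {q}
    refine ⟨0, ?_, ?_⟩ <;> intro y hy <;>
    · have hY : (Y : Set E) = {q} := by
        apply Set.Subset.antisymm
        · intro v hv
          by_contra hvq
          exact hne ⟨v, by
            simp only [Finset.coe_erase, Set.mem_diff, Set.mem_singleton_iff]
            exact ⟨hv, hvq⟩⟩
        · intro v hv; rw [Set.mem_singleton_iff] at hv; subst hv; exact hq
      rw [hY, convexHull_singleton, Set.mem_singleton_iff] at hy
      simp [hy]

end helpers2

section helpers3
variable {E : Type*} [NormedAddCommGroup E] [InnerProductSpace ℝ E] [FiniteDimensional ℝ E]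
open RealInnerProductSpace

lemma finrank_eq_map_add (f : E →ₗ[ℝ] E) (D S : Submodule ℝ E)
    (hker : LinearMap.ker f = D) (hDS : D ≤ S) :
    Module.finrank ℝ S = Module.finrank ℝ (S.map f) + Module.finrank ℝ D := by
  have h := LinearMap.finrank_range_add_finrank_ker (f.domRestrict S)
  rw [LinearMap.range_domRestrict, LinearMap.ker_domRestrict, hker] at h
  rw [(Submodule.comapSubtypeEquivOfLe hDS).finrank_eq] at h
  exact h.symm

variable (D : Submodule ℝ E)

noncomputable def projC : E →ₗ[ℝ] E :=
  LinearMap.id - D.subtype.comp (D.orthogonalProjectionOnto).toLinearMap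

lemma projC_apply (x : E) : projC D x = x - D.orthogonalProjectionOnto x := rfl

lemma projC_mem_orthogonal (x : E) : projC D x ∈ Dᗮ :=
  D.sub_starProjection_mem_orthogonal x

lemma projC_ker : LinearMap.ker (projC D) = D := by
  ext x
  simp only [LinearMap.mem_ker, projC_apply, sub_eq_zero]
  constructor
  · intro h; rw [h]; exact (D.orthogonalProjectionOnto x).2
  · intro h; exact (D.starProjection_eq_self_iff.2 h).symm

lemma projC_inner_eq (u : E) (hu : u ∈ Dᗮ) (x : E) : ⟪u, projC D x⟫ = ⟪u, x⟫ := by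
  have hmem : x - projC D x ∈ D := by
    rw [projC_apply, sub_sub_cancel]; exact (D.orthogonalProjectionOnto x).2
  have : ⟪u, x - projC D x⟫ = 0 := by
    rw [real_inner_comm]
    exact hu _ hmem
  rw [inner_sub_right] at this
  linarith

lemma projC_inner_eq' (u : E) (x : E) (hx : x ∈ Dᗮ) : ⟪projC D u, x⟫ = ⟪u, x⟫ := by
  rw [real_inner_comm, projC_inner_eq D x hx u, real_inner_comm]

end helpers3
section main
open RealInnerProductSpace

set_option maxHeartbeats 1000000 in
/-- Every `k`-dimensional face of a `d`-dimensional convex polytope `P`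
(`0 ≤ k ≤ d-1`) is contained in at least `d-k` faces of `P` of dimension `k+1`. -/
theorem stmt_7 (d k : ℕ) (hk : k < d) {N : ℕ}
    (P : Set (EuclideanSpace ℝ (Fin N))) (hP : IsPolytope P) (hdim : sdim P = d)
    (F : Set (EuclideanSpace ℝ (Fin N))) (hF : IsFaceDim P F k) :
    d - k ≤ {G : Set (EuclideanSpace ℝ (Fin N)) | IsFaceDim P G (k + 1) ∧ F ⊆ G}.ncard := by
  classical
  obtain ⟨S0, hS0fin, hPS⟩ := hP
  obtain ⟨hFexp, hFne, hFdim⟩ := hF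
  obtain ⟨l0, hl0⟩ := hFexp hFne
  set T : Finset (EuclideanSpace ℝ (Fin N)) := hS0fin.toFinset with hTdef
  have hTP : P = convexHull ℝ (T : Set (EuclideanSpace ℝ (Fin N))) := by
    rw [hPS]; congr 1; exact (Set.Finite.coe_toFinset hS0fin).symm
  obtain ⟨z, hzF⟩ := hFne
  have hFP : F ⊆ P := by rw [hl0]; exact fun x hx => hx.1
  have hzP : z ∈ P := hFP hzF
  set u0 : EuclideanSpace ℝ (Fin N) :=
    (InnerProductSpace.toDual ℝ (EuclideanSpace ℝ (Fin N))).symm l0 with hu0def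
  have hu0 : ∀ y, ⟪u0, y⟫ = l0 y := fun y => InnerProductSpace.toDual_symm_apply
  have hzF' : z ∈ {x ∈ P | ∀ y ∈ P, l0 y ≤ l0 x} := hl0 ▸ hzF
  have hmax : ∀ y ∈ P, ⟪u0, y⟫ ≤ ⟪u0, z⟫ := by
    intro y hy; rw [hu0, hu0]; exact hzF'.2 y hy
  have hFiff : ∀ x, x ∈ F ↔ (x ∈ P ∧ ⟪u0, x⟫ = ⟪u0, z⟫) := by
    intro x
    rw [hl0]
    constructor
    · intro hx
      exact ⟨hx.1, le_antisymm (by rw [hu0, hu0]; exact hzF'.2 x hx.1)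
        (by rw [hu0, hu0]; exact hx.2 z hzP)⟩
    · intro hx
      refine ⟨hx.1, fun y hy => ?_⟩
      rw [← hu0, ← hu0, hx.2]
      exact hmax y hy
  set D : Submodule ℝ (EuclideanSpace ℝ (Fin N)) := vectorSpan ℝ F with hDdef
  have hDfin : Module.finrank ℝ D = k := by
    rw [hDdef, ← direction_affineSpan]; exact hFdim
  have hsubD : ∀ p ∈ F, p - z ∈ D := fun p hp => by
    have := vsub_mem_vectorSpan ℝ hp hzF
    simpa [vsub_eq_sub] using this
  have hu0D : u0 ∈ Dᗮ := by
    rw [Submodule.mem_orthogonal]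
    intro v hv
    rw [hDdef, vectorSpan_def] at hv
    rw [real_inner_comm]
    have hker : F -ᵥ F ⊆
        (LinearMap.ker (innerSL ℝ u0 : EuclideanSpace ℝ (Fin N) →ₗ[ℝ] ℝ) : Set (EuclideanSpace ℝ (Fin N))) := by
      rintro w ⟨p, hp, q, hq, rfl⟩
      have hp' := (hFiff p).1 hp
      have hq' := (hFiff q).1 hq
      simp only [SetLike.mem_coe, LinearMap.mem_ker]
      show ⟪u0, p -ᵥ q⟫ = 0
      rw [vsub_eq_sub, inner_sub_right, hp'.2, hq'.2]
      ring
    have := Submodule.span_le.2 hker hv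
    simpa using this
  set π : EuclideanSpace ℝ (Fin N) →ₗ[ℝ] EuclideanSpace ℝ (Fin N) := projC D with hπdef
  set c : EuclideanSpace ℝ (Fin N) → ℝ := fun v => ⟪u0, z⟫ - ⟪u0, v⟫ with hcdef
  have hcsub : ∀ v, ⟪u0, v - z⟫ = -(c v) := by
    intro v; rw [inner_sub_right]; simp only [hcdef]; ring
  have hc0 : ∀ v ∈ P, 0 ≤ c v := fun v hv => by
    have := hmax v hv; simp only [hcdef]; linarith
  have hcF : ∀ v ∈ P, (v ∈ F ↔ c v = 0) := by
    intro v hv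
    rw [hFiff]
    simp only [hcdef]
    constructor
    · intro h; linarith [h.2]
    · intro h; exact ⟨hv, by linarith⟩
  have hTsubP : ∀ v ∈ T, v ∈ P := fun v hv => by
    rw [hTP]; exact subset_convexHull ℝ _ hv
  have hπF : ∀ p ∈ F, π (p - z) = 0 := fun p hp => by
    have h1 := hsubD p hp
    rw [← projC_ker D] at h1
    exact h1
  have hπorth : ∀ x, π x ∈ Dᗮ := fun x => projC_mem_orthogonal D x
  have hπinner : ∀ u ∈ Dᗮ, ∀ x, ⟪u, π x⟫ = ⟪u, x⟫ := fun u hu x => projC_inner_eq D u hu x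
  have hπinner' : ∀ (u : EuclideanSpace ℝ (Fin N)), ∀ x ∈ Dᗮ, ⟪π u, x⟫ = ⟪u, x⟫ :=
    fun u x hx => projC_inner_eq' D u x hx
  -- representation of points of P
  have hrep : ∀ p ∈ P, ∃ w : EuclideanSpace ℝ (Fin N) → ℝ,
      (∀ v ∈ T, 0 ≤ w v) ∧ (∑ v ∈ T, w v = 1) ∧ p = ∑ v ∈ T, w v • v := by
    intro p hp
    rw [hTP, Finset.convexHull_eq] at hp
    obtain ⟨w, hw0, hw1, hwc⟩ := hp
    refine ⟨w, hw0, hw1, ?_⟩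
    rw [← hwc, Finset.centerMass_eq_of_sum_1 _ _ hw1]; rfl
  have hdiff : ∀ p ∈ P, ∃ w : EuclideanSpace ℝ (Fin N) → ℝ,
      (∀ v ∈ T, 0 ≤ w v) ∧ (∑ v ∈ T, w v = 1) ∧
      (p - z = ∑ v ∈ T, w v • (v - z)) ∧ (c p = ∑ v ∈ T, w v * c v) := by
    intro p hp
    obtain ⟨w, hw0, hw1, hwp⟩ := hrep p hp
    have hinnerp : ⟪u0, p⟫ = ∑ v ∈ T, w v * ⟪u0, v⟫ := by
      rw [hwp, inner_sum]
      exact Finset.sum_congr rfl fun v _ => real_inner_smul_right u0 v (w v)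
    refine ⟨w, hw0, hw1, ?_, ?_⟩
    · calc p - z = (∑ v ∈ T, w v • v) - (∑ v ∈ T, w v) • z := by
            rw [← hwp, hw1, one_smul]
        _ = ∑ v ∈ T, (w v • v - w v • z) := by
            rw [Finset.sum_smul, ← Finset.sum_sub_distrib]
        _ = ∑ v ∈ T, w v • (v - z) := by
            exact Finset.sum_congr rfl fun v _ => (smul_sub (w v) v z).symm
    · simp only [hcdef]
      calc ⟪u0, z⟫ - ⟪u0, p⟫
          = ∑ v ∈ T, w v * ⟪u0, z⟫ - ∑ v ∈ T, w v * ⟪u0, v⟫ := by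
            rw [← Finset.sum_mul, hw1, one_mul, hinnerp]
        _ = ∑ v ∈ T, (w v * ⟪u0, z⟫ - w v * ⟪u0, v⟫) := (Finset.sum_sub_distrib _ _).symm
        _ = ∑ v ∈ T, w v * (⟪u0, z⟫ - ⟪u0, v⟫) := by
            exact Finset.sum_congr rfl fun v _ => by ring
  -- the projected generators
  set g : EuclideanSpace ℝ (Fin N) → EuclideanSpace ℝ (Fin N) :=
    fun v => (c v)⁻¹ • π (v - z) with hgdef
  set TX : Finset (EuclideanSpace ℝ (Fin N)) := (T.filter (fun v => v ∉ F)).image g with hTXdef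
  have hTXmem : ∀ x, x ∈ TX ↔ ∃ v, v ∈ T ∧ v ∉ F ∧ g v = x := by
    intro x
    simp only [hTXdef, Finset.mem_image, Finset.mem_filter]
    constructor
    · rintro ⟨v, ⟨h1, h2⟩, h3⟩; exact ⟨v, h1, h2, h3⟩
    · rintro ⟨v, h1, h2, h3⟩; exact ⟨v, ⟨h1, h2⟩, h3⟩
  have hcpos : ∀ v ∈ T, v ∉ F → 0 < c v := by
    intro v hv hvF
    rcases (hc0 v (hTsubP v hv)).lt_or_eq with h | h
    · exact h
    · exact absurd ((hcF v (hTsubP v hv)).2 h.symm) hvF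
  have hXu0 : ∀ x ∈ TX, ⟪u0, x⟫ = -1 := by
    intro x hx
    obtain ⟨v, hvT, hvF, rfl⟩ := (hTXmem x).1 hx
    have hcv := hcpos v hvT hvF
    simp only [hgdef]
    rw [real_inner_smul_right, hπinner u0 hu0D, hcsub]
    field_simp
  have hXD : ∀ x ∈ TX, x ∈ Dᗮ := by
    intro x hx
    obtain ⟨v, hvT, hvF, rfl⟩ := (hTXmem x).1 hx
    exact Submodule.smul_mem _ _ (hπorth _)
  have hconvu0 : ∀ y ∈ convexHull ℝ (TX : Set (EuclideanSpace ℝ (Fin N))), ⟪u0, y⟫ = -1 := by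
    intro y hy
    have hconv : Convex ℝ {w : EuclideanSpace ℝ (Fin N) | ⟪u0, w⟫ = -1} :=
      convex_hyperplane ⟨fun a b => inner_add_right u0 a b,
        fun r a => real_inner_smul_right u0 a r⟩ (-1)
    exact convexHull_min (fun x hx => hXu0 x hx) hconv hy
  have hconvD : ∀ y ∈ convexHull ℝ (TX : Set (EuclideanSpace ℝ (Fin N))), y ∈ Dᗮ := by
    intro y hy
    exact convexHull_min (fun x hx => hXD x hx) (Dᗮ).convex hy
  -- decomposition of tangent directions
  have hdecomp : ∀ p ∈ P, (c p = 0 → π (p - z) = 0) ∧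
      (0 < c p → (c p)⁻¹ • π (p - z) ∈ convexHull ℝ (TX : Set (EuclideanSpace ℝ (Fin N)))) := by
    intro p hp
    constructor
    · intro h0
      exact hπF p ((hcF p hp).2 h0)
    · intro hpos
      obtain ⟨w, hw0, hw1, hvec, hcp⟩ := hdiff p hp
      set T' := T.filter (fun v => v ∉ F) with hT'def
      have hsum' : ∑ v ∈ T', w v * c v = c p := by
        rw [hcp]
        apply Finset.sum_filter_of_ne
        intro v hv hne hvF
        exact hne (by rw [(hcF v (hTsubP v hv)).1 hvF, mul_zero])
      have hvec' : ∑ v ∈ T', w v • π (v - z) = π (p - z) := by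
        have : π (p - z) = ∑ v ∈ T, w v • π (v - z) := by
          rw [hvec, map_sum]
          exact Finset.sum_congr rfl fun v _ => by rw [map_smul]
        rw [this]
        apply Finset.sum_filter_of_ne
        intro v hv hne hvF
        exact hne (by rw [hπF v hvF, smul_zero])
      have hcm : T'.centerMass (fun v => w v * c v) g = (c p)⁻¹ • π (p - z) := by
        rw [Finset.centerMass, hsum']
        congr 1
        rw [← hvec']
        apply Finset.sum_congr rfl
        intro v hv
        rcases Finset.mem_filter.1 hv with ⟨hvT, hvF⟩
        have hcv := (hcpos v hvT hvF).ne'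
        simp only [hgdef]
        rw [smul_smul, mul_assoc, mul_inv_cancel₀ hcv, mul_one]
      rw [← hcm]
      apply Finset.centerMass_mem_convexHull
      · intro v hv
        rcases Finset.mem_filter.1 hv with ⟨hvT, hvF⟩
        exact mul_nonneg (hw0 v hvT) (hc0 v (hTsubP v hvT))
      · rw [hsum']; exact hpos
      · intro v hv
        rcases Finset.mem_filter.1 hv with ⟨hvT, hvF⟩
        exact Finset.mem_coe.2 ((hTXmem (g v)).2 ⟨v, hvT, hvF, rfl⟩)
  -- span computations
  set W : Submodule ℝ (EuclideanSpace ℝ (Fin N)) := vectorSpan ℝ P with hWdef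
  have hWfin : Module.finrank ℝ W = d := by
    rw [hWdef, ← direction_affineSpan]; exact hdim
  have hDW : D ≤ W := vectorSpan_mono ℝ hFP
  have hWspan : W = Submodule.span ℝ
      ((fun v => v - z) '' (T : Set (EuclideanSpace ℝ (Fin N)))) := by
    apply le_antisymm
    · rw [hWdef, vectorSpan_eq_span_vsub_set_right ℝ hzP, Submodule.span_le]
      rintro x ⟨p, hp, rfl⟩
      obtain ⟨w, hw0, hw1, hvec, hcp⟩ := hdiff p hp
      show p - z ∈ _
      rw [hvec]
      apply Submodule.sum_mem
      intro v hv
      exact Submodule.smul_mem _ _ (Submodule.subset_span ⟨v, hv, rfl⟩)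
    · rw [Submodule.span_le]
      rintro x ⟨v, hv, rfl⟩
      have : v -ᵥ z ∈ W := by
        rw [hWdef]
        exact vsub_mem_vectorSpan ℝ (hTsubP v hv) hzP
      simpa [vsub_eq_sub] using this
  have hspanX : Submodule.span ℝ (TX : Set (EuclideanSpace ℝ (Fin N))) = W.map π := by
    rw [hWspan, Submodule.map_span, ← Set.image_comp]
    apply le_antisymm
    · rw [Submodule.span_le]
      intro x hx
      obtain ⟨v, hvT, hvF, rfl⟩ := (hTXmem x).1 (Finset.mem_coe.1 hx)
      simp only [hgdef]
      exact Submodule.smul_mem _ _ (Submodule.subset_span ⟨v, hvT, rfl⟩)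
    · rw [Submodule.span_le]
      rintro x ⟨v, hv, rfl⟩
      by_cases hvF : v ∈ F
      · have : (π ∘ fun v => v - z) v = 0 := hπF v hvF
        rw [this]
        exact Submodule.zero_mem _
      · have hvT : v ∈ T := hv
        have hcv := (hcpos v hvT hvF).ne'
        have : (π ∘ fun v => v - z) v = c v • g v := by
          simp only [hgdef, Function.comp_apply]
          rw [smul_smul, mul_inv_cancel₀ hcv, one_smul]
        rw [this]
        exact Submodule.smul_mem _ _
          (Submodule.subset_span (Finset.mem_coe.2 ((hTXmem (g v)).2 ⟨v, hvT, hvF, rfl⟩)))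
  have hrankW : Module.finrank ℝ (W.map π) = d - k := by
    have h := finrank_eq_map_add π D W (projC_ker D) hDW
    rw [hWfin, hDfin] at h
    omega
  -- minimal generating subset
  obtain ⟨X', hX'sub, hX'conv, hX'min⟩ := exists_minimal_hull TX
  have hX'mem : ∀ q ∈ X', q ∈ TX := fun q hq => hX'sub hq
  have hcardX' : d - k ≤ X'.card := by
    have h1 : Submodule.span ℝ (TX : Set (EuclideanSpace ℝ (Fin N))) ≤
        Submodule.span ℝ (X' : Set (EuclideanSpace ℝ (Fin N))) := by
      rw [Submodule.span_le]
      intro x hx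
      have : x ∈ convexHull ℝ (X' : Set (EuclideanSpace ℝ (Fin N))) := by
        rw [hX'conv]
        exact subset_convexHull ℝ _ hx
      exact convexHull_min Submodule.subset_span (Submodule.span ℝ _).convex this
    have h2 : d - k ≤ Module.finrank ℝ (Submodule.span ℝ (X' : Set (EuclideanSpace ℝ (Fin N)))) := by
      rw [← hrankW, ← hspanX]
      exact Submodule.finrank_mono h1
    exact h2.trans (finrank_span_finset_le_card X')
  -- separating functionals
  have hsep : ∀ q : EuclideanSpace ℝ (Fin N), ∃ u : EuclideanSpace ℝ (Fin N), q ∈ X' →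
      (∀ y ∈ convexHull ℝ (X' : Set (EuclideanSpace ℝ (Fin N))), ⟪u, y⟫ ≤ ⟪u, q⟫) ∧
      (∀ y ∈ convexHull ℝ (X' : Set (EuclideanSpace ℝ (Fin N))), ⟪u, y⟫ = ⟪u, q⟫ → y = q) := by
    intro q
    by_cases hq : q ∈ X'
    · obtain ⟨u, hu1, hu2⟩ := exists_vertex_functional X' q hq (hX'min q hq)
      exact ⟨u, fun _ => ⟨hu1, hu2⟩⟩
    · exact ⟨0, fun h => absurd h hq⟩
  choose u hu using hsep
  set u' : EuclideanSpace ℝ (Fin N) → EuclideanSpace ℝ (Fin N) :=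
    fun q => π (u q) + (⟪π (u q), q⟫) • u0 with hu'def
  have hu'D : ∀ q, u' q ∈ Dᗮ := fun q =>
    Submodule.add_mem _ (hπorth _) (Submodule.smul_mem _ _ hu0D)
  set Φ : EuclideanSpace ℝ (Fin N) → Set (EuclideanSpace ℝ (Fin N)) :=
    fun q => {x ∈ P | ∀ y ∈ P, ⟪u' q, y⟫ ≤ ⟪u' q, x⟫} with hΦdef
  have hu'0 : ∀ q ∈ X', ⟪u' q, q⟫ = 0 := by
    intro q hq
    have hq0 : ⟪u0, q⟫ = -1 := hXu0 q (hX'mem q hq)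
    simp only [hu'def]
    rw [inner_add_left, real_inner_smul_left, hq0]
    ring
  -- the key face property
  have hface : ∀ q ∈ X', ∀ p ∈ P, ⟪u' q, p - z⟫ ≤ 0 ∧
      (⟪u' q, p - z⟫ = 0 → ∃ t : ℝ, 0 ≤ t ∧ π (p - z) = t • q) := by
    intro q hq p hp
    have hπeq : ⟪u' q, p - z⟫ = ⟪u' q, π (p - z)⟫ := (hπinner (u' q) (hu'D q) (p - z)).symm
    obtain ⟨hzero, hpos⟩ := hdecomp p hp
    rcases (hc0 p hp).lt_or_eq with h0 | h0
    · set y := (c p)⁻¹ • π (p - z) with hydef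
      have hy := hpos h0
      have hxy : π (p - z) = c p • y := by
        rw [hydef, smul_smul, mul_inv_cancel₀ h0.ne', one_smul]
      have hyD : y ∈ Dᗮ := hconvD y hy
      have hqD : q ∈ Dᗮ := hXD q (hX'mem q hq)
      have hval : ⟪u' q, y⟫ = ⟪u q, y⟫ - ⟪u q, q⟫ := by
        simp only [hu'def]
        rw [inner_add_left, real_inner_smul_left, hconvu0 y hy,
          hπinner' (u q) y hyD, hπinner' (u q) q hqD]
        ring
      have hy' : y ∈ convexHull ℝ (X' : Set (EuclideanSpace ℝ (Fin N))) := by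
        rw [hX'conv]; exact hy
      have hle := ((hu q) hq).1 y hy'
      constructor
      · rw [hπeq, hxy, real_inner_smul_right, hval]
        exact mul_nonpos_of_nonneg_of_nonpos h0.le (by linarith)
      · intro heq
        rw [hπeq, hxy, real_inner_smul_right, hval] at heq
        have hdiff0 : ⟪u q, y⟫ = ⟪u q, q⟫ := by
          rcases mul_eq_zero.1 heq with h | h
          · exact absurd h h0.ne'
          · linarith
        have hyq := ((hu q) hq).2 y hy' hdiff0
        exact ⟨c p, h0.le, by rw [hxy, hyq]⟩
    · have hπ0 : π (p - z) = 0 := hzero h0.symm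
      constructor
      · rw [hπeq, hπ0, inner_zero_right]
      · intro _
        exact ⟨0, le_refl 0, by rw [hπ0, zero_smul]⟩
  have hzΦ : ∀ q ∈ X', z ∈ Φ q := by
    intro q hq
    refine ⟨hzP, fun y hy => ?_⟩
    have := (hface q hq y hy).1
    rw [inner_sub_right] at this
    linarith
  have hΦiff : ∀ q ∈ X', ∀ p, p ∈ Φ q ↔ (p ∈ P ∧ ⟪u' q, p - z⟫ = 0) := by
    intro q hq p
    constructor
    · intro hp
      refine ⟨hp.1, le_antisymm (hface q hq p hp.1).1 ?_⟩
      have := hp.2 z hzP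
      rw [inner_sub_right]
      linarith
    · rintro ⟨hpP, hp0⟩
      refine ⟨hpP, fun y hy => ?_⟩
      have h1 := (hface q hq y hy).1
      rw [inner_sub_right] at h1 hp0
      linarith
  have hFΦ : ∀ q ∈ X', F ⊆ Φ q := by
    intro q hq p hp
    rw [hΦiff q hq]
    refine ⟨hFP hp, ?_⟩
    have hpD : p - z ∈ D := hsubD p hp
    have := (hu'D q) -- u' q ∈ Dᗮ
    rw [real_inner_comm]
    exact (Submodule.mem_orthogonal D (u' q)).1 this (p - z) hpD
  have hgen : ∀ q ∈ X', ∃ v, v ∈ Φ q ∧ π (v - z) = c v • q ∧ 0 < c v := by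
    intro q hq
    obtain ⟨v, hvT, hvF, hgv⟩ := (hTXmem q).1 (hX'mem q hq)
    have hvP : v ∈ P := hTsubP v hvT
    have hcv := hcpos v hvT hvF
    have hπv : π (v - z) = c v • q := by
      rw [← hgv]
      simp only [hgdef]
      rw [smul_smul, mul_inv_cancel₀ hcv.ne', one_smul]
    refine ⟨v, ?_, hπv, hcv⟩
    rw [hΦiff q hq]
    refine ⟨hvP, ?_⟩
    rw [← hπinner (u' q) (hu'D q) (v - z), hπv, real_inner_smul_right, hu'0 q hq, mul_zero]
  have hqne0 : ∀ q ∈ X', q ≠ 0 := by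
    intro q hq h0
    have := hXu0 q (hX'mem q hq)
    rw [h0, inner_zero_right] at this
    norm_num at this
  have hΦdim : ∀ q ∈ X', sdim (Φ q) = k + 1 := by
    intro q hq
    have hzq := hzΦ q hq
    show Module.finrank ℝ (affineSpan ℝ (Φ q)).direction = k + 1
    rw [direction_affineSpan, vectorSpan_eq_span_vsub_set_right ℝ hzq]
    have himg : ((· -ᵥ z) '' Φ q) = ((fun x => x - z) '' Φ q) := rfl
    rw [himg]
    set Sq : Submodule ℝ (EuclideanSpace ℝ (Fin N)) :=
      Submodule.span ℝ ((fun x => x - z) '' Φ q) with hSqdef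
    have hDSq : D ≤ Sq := by
      rw [hDdef, vectorSpan_eq_span_vsub_set_right ℝ hzF]
      have hiF : ((· -ᵥ z) '' F) = ((fun x => x - z) '' F) := rfl
      rw [hiF]
      exact Submodule.span_mono (Set.image_mono (hFΦ q hq))
    have hmapSq : Sq.map π = Submodule.span ℝ {q} := by
      rw [hSqdef, Submodule.map_span, ← Set.image_comp]
      apply le_antisymm
      · rw [Submodule.span_le]
        rintro x ⟨p, hp, rfl⟩
        have hp0 := ((hΦiff q hq p).1 hp).2
        obtain ⟨t, ht0, hteq⟩ := (hface q hq p ((hΦiff q hq p).1 hp).1).2 hp0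
        simp only [Function.comp_apply]
        rw [hteq]
        exact Submodule.smul_mem _ _ (Submodule.subset_span rfl)
      · rw [Submodule.span_le]
        intro x hx
        rw [Set.mem_singleton_iff] at hx
        rw [hx]
        obtain ⟨v, hvΦ, hveq, hcv⟩ := hgen q hq
        have hmem := Submodule.smul_mem
          (Submodule.span ℝ ((⇑π ∘ fun x => x - z) '' Φ q)) (c v)⁻¹
          (Submodule.subset_span ⟨v, hvΦ, rfl⟩)
        have hq' : (c v)⁻¹ • (⇑π ∘ fun x => x - z) v = q := by
          simp only [Function.comp_apply]
          rw [hveq, smul_smul, inv_mul_cancel₀ hcv.ne', one_smul]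
        rwa [hq'] at hmem
    have h := finrank_eq_map_add π D Sq (projC_ker D) hDSq
    rw [hmapSq] at h
    have h1 : Module.finrank ℝ
        (Submodule.span ℝ ({q} : Set (EuclideanSpace ℝ (Fin N)))) = 1 :=
      finrank_span_singleton (hqne0 q hq)
    rw [h1, hDfin] at h
    omega
  have hΦexp : ∀ q ∈ X', IsExposed ℝ P (Φ q) := by
    intro q hq _
    exact ⟨innerSL ℝ (u' q), rfl⟩
  have hinj : Set.InjOn Φ (X' : Set (EuclideanSpace ℝ (Fin N))) := by
    intro q1 h1' q2 h2' heq
    have h1 : q1 ∈ X' := Finset.mem_coe.1 h1'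
    have h2 : q2 ∈ X' := Finset.mem_coe.1 h2'
    obtain ⟨v, hvΦ, hveq, hcv⟩ := hgen q1 h1
    have hvΦ2 : v ∈ Φ q2 := heq ▸ hvΦ
    have hvP : v ∈ P := ((hΦiff q2 h2 v).1 hvΦ2).1
    obtain ⟨t, ht0, hteq⟩ := (hface q2 h2 v hvP).2 ((hΦiff q2 h2 v).1 hvΦ2).2
    have hcq : c v • q1 = t • q2 := by rw [← hveq, ← hteq]
    have hinner : c v * ⟪u0, q1⟫ = t * ⟪u0, q2⟫ := by
      have h : ⟪u0, c v • q1⟫ = ⟪u0, t • q2⟫ := by rw [hcq]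
      rw [real_inner_smul_right, real_inner_smul_right] at h
      exact h
    rw [hXu0 q1 (hX'mem q1 h1), hXu0 q2 (hX'mem q2 h2)] at hinner
    have htc : t = c v := by linarith
    have hceq : c v • q1 = c v • q2 := by rw [hcq, htc]
    exact smul_right_injective _ hcv.ne' hceq
  have himg : Φ '' (X' : Set (EuclideanSpace ℝ (Fin N))) ⊆
      {G : Set (EuclideanSpace ℝ (Fin N)) | IsFaceDim P G (k + 1) ∧ F ⊆ G} := by
    rintro G ⟨q, hq, rfl⟩
    have hq' : q ∈ X' := Finset.mem_coe.1 hq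
    exact ⟨⟨hΦexp q hq', ⟨z, hzΦ q hq'⟩, hΦdim q hq'⟩, hFΦ q hq'⟩
  have hfin : {G : Set (EuclideanSpace ℝ (Fin N)) | IsFaceDim P G (k + 1) ∧ F ⊆ G}.Finite := by
    apply Set.Finite.subset ((T.finite_toSet.finite_subsets).image (convexHull ℝ))
    rintro G ⟨⟨hGexp, hGne, _⟩, _⟩
    obtain ⟨l, hl⟩ := hGexp hGne
    have hGeq : G = convexHull ℝ ((T : Set (EuclideanSpace ℝ (Fin N))) ∩ G) := by
      apply argmax_hull_eq T l G
      rw [← hTP]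
      exact hl
    exact ⟨(T : Set (EuclideanSpace ℝ (Fin N))) ∩ G, Set.inter_subset_left, hGeq.symm⟩
  calc d - k ≤ X'.card := hcardX'
    _ = (X' : Set (EuclideanSpace ℝ (Fin N))).ncard := (Set.ncard_coe_finset X').symm
    _ = (Φ '' (X' : Set (EuclideanSpace ℝ (Fin N)))).ncard :=
        (Set.ncard_image_of_injOn hinj).symm
    _ ≤ _ := Set.ncard_le_ncard himg hfin

end main
end

section
/- Let P be a convex polytope of dimension d ≥ 5 and let U be a set of two-dimensional faces of P with |U| < 3d-6. Then at most two edges of P are contained in d-1 or more members of U. -/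
open Set

/-- A linear functional constant on a set is constant on its affine span. -/
lemma aux_const_on_span {N : ℕ} (l : EuclideanSpace ℝ (Fin N) →L[ℝ] ℝ)
    {F : Set (EuclideanSpace ℝ (Fin N))} {c : ℝ} (h : ∀ x ∈ F, l x = c) :
    ∀ x ∈ affineSpan ℝ F, l x = c := by
  intro x hx
  refine affineSpan_induction (p := fun y => l y = c) hx h ?_
  intro a u v w hu hv hw
  simp only [vsub_eq_sub, vadd_eq_add, map_add, map_smul, map_sub, smul_eq_mul, hu, hv, hw]
  ring

/-- A subset of `P` contained in the affine span of a nonempty exposed face `F`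
of `P` is contained in `F`. -/
lemma aux_subset_of_subset_span {N : ℕ} {P F F' : Set (EuclideanSpace ℝ (Fin N))}
    (hF : IsExposed ℝ P F) (hne : F.Nonempty) (hF'P : F' ⊆ P)
    (h : F' ⊆ (affineSpan ℝ F : Set (EuclideanSpace ℝ (Fin N)))) : F' ⊆ F := by
  obtain ⟨l, hl⟩ := hF hne
  obtain ⟨x0, hx0⟩ := hne
  have hx0' := hx0
  rw [hl] at hx0'
  have hconst : ∀ x ∈ F, l x = l x0 := by
    intro x hx
    rw [hl] at hx
    exact le_antisymm (hx0'.2 x hx.1) (hx.2 x0 hx0'.1)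
  have hspan := aux_const_on_span l hconst
  intro x hx
  rw [hl]
  refine ⟨hF'P hx, fun y hy => ?_⟩
  rw [hspan x (h hx)]
  exact hx0'.2 y hy

/-- Two nonempty exposed faces with the same affine span are equal. -/
lemma aux_eq_of_span_eq {N : ℕ} {P F F' : Set (EuclideanSpace ℝ (Fin N))}
    (hF : IsExposed ℝ P F) (hF' : IsExposed ℝ P F')
    (hne : F.Nonempty) (hne' : F'.Nonempty)
    (hspan : affineSpan ℝ F = affineSpan ℝ F') : F = F' :=
  Subset.antisymm
    (aux_subset_of_subset_span hF' hne' hF.subset (hspan ▸ subset_affineSpan ℝ F))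
    (aux_subset_of_subset_span hF hne hF'.subset (hspan ▸ subset_affineSpan ℝ F'))

/-- A nonempty affine subspace contained in another of no larger dimension equals it. -/
lemma aux_span_eq_of_le {N : ℕ} {s t : AffineSubspace ℝ (EuclideanSpace ℝ (Fin N))}
    (hst : s ≤ t) (hs : (s : Set (EuclideanSpace ℝ (Fin N))).Nonempty)
    (h : Module.finrank ℝ t.direction ≤ Module.finrank ℝ s.direction) : s = t := by
  obtain ⟨p, hp⟩ := hs
  refine AffineSubspace.ext_of_direction_eq ?_ ⟨p, hp, hst hp⟩
  exact Submodule.eq_of_le_of_finrank_eq (AffineSubspace.direction_le hst)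
    (le_antisymm (Submodule.finrank_mono (AffineSubspace.direction_le hst)) h)

/-- Two distinct edges of `P` are both contained in at most one common 2-face. -/
lemma aux_unique_two_face {N : ℕ} {P e e' u u' : Set (EuclideanSpace ℝ (Fin N))}
    (he : IsFaceDim P e 1) (he' : IsFaceDim P e' 1) (hee' : e ≠ e')
    (hu : IsFaceDim P u 2) (hu' : IsFaceDim P u' 2)
    (h1 : e ⊆ u) (h2 : e' ⊆ u) (h3 : e ⊆ u') (h4 : e' ⊆ u') : u = u' := by
  obtain ⟨heE, hene, hed⟩ := he
  obtain ⟨heE', hene', hed'⟩ := he'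
  set s := affineSpan ℝ (e ∪ e') with hs
  have hsu : s ≤ affineSpan ℝ u := affineSpan_mono ℝ (union_subset h1 h2)
  have hsu' : s ≤ affineSpan ℝ u' := affineSpan_mono ℝ (union_subset h3 h4)
  have hes : affineSpan ℝ e ≤ s := affineSpan_mono ℝ subset_union_left
  have he's : affineSpan ℝ e' ≤ s := affineSpan_mono ℝ subset_union_right
  have hedr : Module.finrank ℝ (affineSpan ℝ e).direction = 1 := hed
  have hedr' : Module.finrank ℝ (affineSpan ℝ e').direction = 1 := hed'
  have hur : Module.finrank ℝ (affineSpan ℝ u).direction = 2 := hu.2.2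
  have hur' : Module.finrank ℝ (affineSpan ℝ u').direction = 2 := hu'.2.2
  have hene_span : (affineSpan ℝ e : Set (EuclideanSpace ℝ (Fin N))).Nonempty :=
    hene.mono (subset_affineSpan ℝ e)
  have hene_span' : (affineSpan ℝ e' : Set (EuclideanSpace ℝ (Fin N))).Nonempty :=
    hene'.mono (subset_affineSpan ℝ e')
  have hsne : (s : Set (EuclideanSpace ℝ (Fin N))).Nonempty :=
    hene.mono ((subset_union_left).trans (subset_affineSpan ℝ (e ∪ e')))
  by_cases hdim : Module.finrank ℝ s.direction ≤ 1
  · exfalso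
    have h5 : affineSpan ℝ e = s :=
      aux_span_eq_of_le hes hene_span (by rw [hedr]; exact hdim)
    have h6 : affineSpan ℝ e' = s :=
      aux_span_eq_of_le he's hene_span' (by rw [hedr']; exact hdim)
    exact hee' (aux_eq_of_span_eq heE heE' hene hene' (h5.trans h6.symm))
  · push_neg at hdim
    have hdle : Module.finrank ℝ s.direction ≤ 2 := by
      have := Submodule.finrank_mono (AffineSubspace.direction_le hsu)
      rw [hur] at this; exact this
    have h5 : s = affineSpan ℝ u :=
      aux_span_eq_of_le hsu hsne (by rw [hur]; omega)
    have h6 : s = affineSpan ℝ u' :=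
      aux_span_eq_of_le hsu' hsne (by rw [hur']; omega)
    exact aux_eq_of_span_eq hu.1 hu'.1 hu.2.1 hu'.2.1 (h5 ▸ h6)

/-- If `P` is a convex polytope of dimension `d ≥ 5` and `U` is a set of
two-dimensional faces of `P` with `|U| < 3d-6`, then at most two edges of `P`
are contained in `d-1` or more members of `U`. -/
theorem stmt_12 (d : ℕ) (hd : 5 ≤ d) {N : ℕ}
    (P : Set (EuclideanSpace ℝ (Fin N))) (hP : IsPolytope P) (hdim : sdim P = d)
    (U : Set (Set (EuclideanSpace ℝ (Fin N)))) (hU : ∀ u ∈ U, IsFaceDim P u 2)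
    (hUfin : U.Finite) (hUcard : U.ncard < 3 * d - 6) :
    {e : Set (EuclideanSpace ℝ (Fin N)) |
      IsFaceDim P e 1 ∧ d - 1 ≤ {u ∈ U | e ⊆ u}.ncard}.ncard ≤ 2 := by
  classical
  set T : Set (Set (EuclideanSpace ℝ (Fin N))) :=
    {e | IsFaceDim P e 1 ∧ d - 1 ≤ {u ∈ U | e ⊆ u}.ncard} with hTdef
  by_contra hc
  push_neg at hc
  have hTfin : T.Finite := by
    by_contra hinf
    rw [Set.Infinite.ncard (fun h => hinf h)] at hc
    omega
  have h3 : 3 ≤ hTfin.toFinset.card := by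
    rw [Set.ncard_eq_toFinset_card _ hTfin] at hc; omega
  obtain ⟨t, hts, htc⟩ := Finset.exists_subset_card_eq h3
  rw [Finset.card_eq_three] at htc
  obtain ⟨e1, e2, e3, h12, h13, h23, ht⟩ := htc
  have he1 : e1 ∈ T := hTfin.mem_toFinset.mp (hts (by simp [ht]))
  have he2 : e2 ∈ T := hTfin.mem_toFinset.mp (hts (by simp [ht]))
  have he3 : e3 ∈ T := hTfin.mem_toFinset.mp (hts (by simp [ht]))
  set UF := hUfin.toFinset with hUF
  set A1 := UF.filter (fun u => e1 ⊆ u) with hA1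
  set A2 := UF.filter (fun u => e2 ⊆ u) with hA2
  set A3 := UF.filter (fun u => e3 ⊆ u) with hA3
  have hcard : ∀ e ∈ T, {u ∈ U | e ⊆ u}.ncard = (UF.filter (fun u => e ⊆ u)).card := by
    intro e _
    rw [← Set.ncard_coe_finset]
    congr 1
    ext u
    simp [hUF, Set.Finite.mem_toFinset]
  have hc1 : d - 1 ≤ A1.card := by rw [hA1, ← hcard e1 he1]; exact he1.2
  have hc2 : d - 1 ≤ A2.card := by rw [hA2, ← hcard e2 he2]; exact he2.2
  have hc3 : d - 1 ≤ A3.card := by rw [hA3, ← hcard e3 he3]; exact he3.2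
  have hinter : ∀ (ea eb : Set (EuclideanSpace ℝ (Fin N))),
      IsFaceDim P ea 1 → IsFaceDim P eb 1 → ea ≠ eb →
      ((UF.filter (fun u => ea ⊆ u)) ∩ (UF.filter (fun u => eb ⊆ u))).card ≤ 1 := by
    intro ea eb hfa hfb hab
    refine Finset.card_le_one.mpr ?_
    intro u hu u' hu'
    simp only [Finset.mem_inter, Finset.mem_filter] at hu hu'
    exact aux_unique_two_face hfa hfb hab
      (hU u (hUfin.mem_toFinset.mp hu.1.1)) (hU u' (hUfin.mem_toFinset.mp hu'.1.1))
      hu.1.2 hu.2.2 hu'.1.2 hu'.2.2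
  have hi12 : (A1 ∩ A2).card ≤ 1 := hinter e1 e2 he1.1 he2.1 h12
  have hi13 : (A1 ∩ A3).card ≤ 1 := hinter e1 e3 he1.1 he3.1 h13
  have hi23 : (A2 ∩ A3).card ≤ 1 := hinter e2 e3 he2.1 he3.1 h23
  have hu12 : (A1 ∪ A2).card + (A1 ∩ A2).card = A1.card + A2.card :=
    Finset.card_union_add_card_inter _ _
  have hu123 : ((A1 ∪ A2) ∪ A3).card + ((A1 ∪ A2) ∩ A3).card = (A1 ∪ A2).card + A3.card :=
    Finset.card_union_add_card_inter _ _
  have hsplit : ((A1 ∪ A2) ∩ A3).card ≤ (A1 ∩ A3).card + (A2 ∩ A3).card := by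
    rw [Finset.union_inter_distrib_right]
    exact Finset.card_union_le _ _
  have hUbound : ((A1 ∪ A2) ∪ A3).card ≤ UF.card := by
    refine Finset.card_le_card ?_
    intro u hu
    simp only [Finset.mem_union, Finset.mem_filter, hA1, hA2, hA3] at hu
    rcases hu with (h | h) | h <;> exact h.1
  have hUFc : UF.card = U.ncard := (Set.ncard_eq_toFinset_card U hUfin).symm
  omega
end

section
/- Let P be a convex polytope of dimension d ≥ 5 and let U be a set of two-dimensional faces of P with |U| < 3d-6. Call a vertex of P bad if it belongs to at least 2d-4 members of U and call an edge of P bad if it is contained in at least d-1 members of U. Then any two distinct bad vertices of P are the endpoints of a common bad edge, P has at most two bad vertices, and every bad vertex is an endpoint of every bad edge. -/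
open Set

section Aux

variable {N : ℕ}

local notation "E" => EuclideanSpace ℝ (Fin N)

lemma sdim_mono {S T : Set E} (h : S ⊆ T) : sdim S ≤ sdim T :=
  Submodule.finrank_mono (AffineSubspace.direction_le (affineSpan_mono ℝ h))

lemma one_le_sdim {S : Set E} {x y : E} (hxy : x ≠ y) (hx : x ∈ S) (hy : y ∈ S) :
    1 ≤ sdim S := by
  have hmem : y - x ∈ (affineSpan ℝ S).direction := by
    simpa using AffineSubspace.vsub_mem_direction (mem_affineSpan ℝ hy) (mem_affineSpan ℝ hx)
  have : Nontrivial ((affineSpan ℝ S).direction) := by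
    refine nontrivial_of_ne ⟨y - x, hmem⟩ 0 ?_
    simp only [ne_eq, Submodule.mk_eq_zero]
    exact sub_ne_zero.mpr hxy.symm
  exact Module.finrank_pos_iff (R := ℝ) (M := (affineSpan ℝ S).direction) |>.mpr this

lemma sdim_subsingleton {S : Set E} (h : S.Subsingleton) : sdim S = 0 := by
  rcases h.eq_empty_or_singleton with rfl | ⟨a, rfl⟩ <;>
    simp [sdim, direction_affineSpan, vectorSpan_def]

lemma exists_pair_of_sdim {S : Set E} (h : 1 ≤ sdim S) :
    ∃ a b, a ∈ S ∧ b ∈ S ∧ a ≠ b := by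
  by_contra hc
  push_neg at hc
  have : S.Subsingleton := fun a ha b hb => hc a b ha hb
  rw [sdim_subsingleton this] at h; omega

/-- restricting an exposed set to a subset of `P`. -/
lemma exposed_restrict {P F B : Set E} (hF : IsExposed ℝ P F) (hB : B ⊆ P) :
    IsExposed ℝ B (F ∩ B) := by
  rintro ⟨x, hxF, hxB⟩
  obtain ⟨l, hl⟩ := hF ⟨x, hxF⟩
  refine ⟨l, ?_⟩
  ext z
  constructor
  · rintro ⟨hzF, hzB⟩
    rw [hl] at hzF
    exact ⟨hzB, fun y hy => hzF.2 y (hB hy)⟩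
  · rintro ⟨hzB, hz⟩
    have hxmax := (hl ▸ hxF).2
    have hzP : z ∈ P := hB hzB
    refine ⟨?_, hzB⟩
    rw [hl]
    refine ⟨hzP, fun y hy => ?_⟩
    calc l y ≤ l x := hxmax y hy
      _ ≤ l z := hz x hxB

/-- A nonempty exposed subset of full dimension equals the whole set. -/
lemma face_eq_of_sdim {A F : Set E} (hexp : IsExposed ℝ A F) (hne : F.Nonempty)
    (hdim : sdim A ≤ sdim F) : F = A := by
  obtain ⟨l, hl⟩ := hexp hne
  have hFA : F ⊆ A := hexp.subset
  have hddim : sdim F = sdim A := le_antisymm (sdim_mono hFA) hdim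
  obtain ⟨f, hf⟩ := hne
  have hspan : affineSpan ℝ F = affineSpan ℝ A := by
    refine AffineSubspace.ext_of_direction_eq ?_
      ⟨f, mem_affineSpan ℝ hf, mem_affineSpan ℝ (hFA hf)⟩
    exact Submodule.eq_of_le_of_finrank_eq
      (AffineSubspace.direction_le (affineSpan_mono ℝ hFA)) hddim
  have hker : vectorSpan ℝ F ≤ LinearMap.ker (l : E →ₗ[ℝ] ℝ) := by
    rw [vectorSpan_def]
    refine Submodule.span_le.mpr ?_
    rintro v ⟨p, hp, q, hq, rfl⟩
    have hp' := hl ▸ hp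
    have hq' := hl ▸ hq
    have h1 : l p ≤ l q := hq'.2 p (hFA hp)
    have h2 : l q ≤ l p := hp'.2 q (hFA hq)
    simp only [SetLike.mem_coe, LinearMap.mem_ker, ContinuousLinearMap.coe_coe]
    have : l (p -ᵥ q) = l p - l q := by simp [vsub_eq_sub]
    rw [this]
    linarith
  have hconst : ∀ a ∈ A, l a = l f := by
    intro a ha
    have hmem : a -ᵥ f ∈ vectorSpan ℝ F := by
      rw [← direction_affineSpan, hspan]
      exact AffineSubspace.vsub_mem_direction (mem_affineSpan ℝ ha) (mem_affineSpan ℝ (hFA hf))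
    have := hker hmem
    simp only [LinearMap.mem_ker, ContinuousLinearMap.coe_coe] at this
    have : l (a - f) = 0 := this
    rw [map_sub] at this
    linarith
  refine Set.Subset.antisymm hFA fun a ha => ?_
  rw [hl]
  refine ⟨ha, fun y hy => ?_⟩
  rw [hconst a ha, hconst y hy]

/-- Two distinct 2-faces intersect in dimension at most 1. -/
lemma inter_sdim_le_one {P u u' : Set E} (hu : IsFaceDim P u 2) (hu' : IsFaceDim P u' 2)
    (hne : u ≠ u') : sdim (u ∩ u') ≤ 1 := by
  by_contra h
  push_neg at h
  rcases Set.eq_empty_or_nonempty (u ∩ u') with he | hne'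
  · rw [he, sdim_subsingleton subsingleton_empty] at h; omega
  · have h2 : sdim u ≤ sdim (u ∩ u') := by rw [hu.2.2]; omega
    have e1 : IsExposed ℝ u (u' ∩ u) := exposed_restrict hu'.1 hu.1.subset
    have heq1 : u' ∩ u = u := face_eq_of_sdim e1 (by rwa [inter_comm] at hne')
      (by rwa [inter_comm u u'] at h2)
    have h2' : sdim u' ≤ sdim (u' ∩ u) := by
      rw [hu'.2.2, inter_comm]
      calc 2 ≤ sdim (u ∩ u') := by omega
        _ = _ := by rw [inter_comm]
    have e2 : IsExposed ℝ u' (u ∩ u') := exposed_restrict hu.1 hu'.1.subset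
    have heq2 : u ∩ u' = u' := face_eq_of_sdim e2 hne' (by
      calc sdim u' ≤ sdim (u' ∩ u) := h2'
        _ = sdim (u ∩ u') := by rw [inter_comm])
    have s1 : u ⊆ u' := by intro w hw; rw [← heq1] at hw; exact hw.1
    have s2 : u' ⊆ u := by intro w hw; rw [← heq2] at hw; exact hw.1
    exact hne (Set.Subset.antisymm s1 s2)

/-- An edge whose two distinct points lie in a face `u` is contained in `u`. -/
lemma edge_subset {P e u : Set E} (he : IsFaceDim P e 1) (hu : IsExposed ℝ P u)
    {x y : E} (hxy : x ≠ y) (hxe : x ∈ e) (hye : y ∈ e) (hxu : x ∈ u) (hyu : y ∈ u) :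
    e ⊆ u := by
  have hres : IsExposed ℝ e (u ∩ e) := exposed_restrict hu he.1.subset
  have heq : u ∩ e = e := by
    refine face_eq_of_sdim hres ⟨x, hxu, hxe⟩ ?_
    rw [he.2.2]
    exact one_le_sdim hxy ⟨hxu, hxe⟩ ⟨hyu, hye⟩
  intro z hz
  rw [← heq] at hz
  exact hz.1

/-- An exposed point of `P` is not between two other points of `P`. -/
lemma not_wbtw_exposed {P : Set E} {a b c : E} (hb : IsExposed ℝ P {b}) (ha : a ∈ P)
    (hc : c ∈ P) (hab : a ≠ b) (hcb : c ≠ b) : ¬ Wbtw ℝ a b c := by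
  intro hw
  obtain ⟨l, hl⟩ := hb (singleton_nonempty b)
  have hbmem : b ∈ ({b} : Set E) := rfl
  rw [hl] at hbmem
  obtain ⟨hbP, hmax⟩ := hbmem
  rw [← mem_segment_iff_wbtw] at hw
  obtain ⟨s, t, hs, ht, hst, habc⟩ := hw
  have h1 : l a ≤ l b := hmax a ha
  have h2 : l c ≤ l b := hmax c hc
  rcases eq_or_lt_of_le hs with hs0 | hs0
  · have ht1 : t = 1 := by linarith
    have : c = b := by
      rw [← habc, ← hs0, ht1]; simp
    exact hcb this
  · have hlb : l b = s * l a + t * l c := by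
      rw [← habc]; simp [map_add, map_smul]
    have hla' : l b ≤ l a := by
      by_contra hlt
      push_neg at hlt
      have k1 : s * l a < s * l b := mul_lt_mul_of_pos_left hlt hs0
      have k2 : t * l c ≤ t * l b := mul_le_mul_of_nonneg_left h2 ht
      have k3 : s * l b + t * l b = l b := by rw [← add_mul, hst, one_mul]
      linarith
    have hla : l a = l b := le_antisymm h1 hla'
    have : a ∈ ({b} : Set E) := by
      rw [hl]
      exact ⟨ha, fun y hy => hla ▸ hmax y hy⟩
    exact hab this

lemma ncard_add_le {α : Type*} {A B C : Set α} (hC : C.Finite) (hA : A ⊆ C) (hB : B ⊆ C) :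
    A.ncard + B.ncard ≤ C.ncard + (A ∩ B).ncard := by
  rw [← Set.ncard_union_add_ncard_inter A B (hC.subset hA) (hC.subset hB)]
  exact Nat.add_le_add_right (Set.ncard_le_ncard (union_subset hA hB) hC) _

end Aux

/-- Let `P` be a convex polytope of dimension `d ≥ 5` and `U` a set of
two-dimensional faces of `P` with `|U| < 3d-6`.  Call a vertex `x` bad if it
belongs to at least `2d-4` members of `U`, and an edge bad if it is contained
in at least `d-1` members of `U`.  Then any two distinct bad vertices are the
endpoints of a common bad edge, there are at most two bad vertices, and every
bad vertex is an endpoint of every bad edge. -/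
theorem stmt_13 (d : ℕ) (hd : 5 ≤ d) {N : ℕ}
    (P : Set (EuclideanSpace ℝ (Fin N))) (hP : IsPolytope P) (hdim : sdim P = d)
    (U : Set (Set (EuclideanSpace ℝ (Fin N)))) (hU : ∀ u ∈ U, IsFaceDim P u 2)
    (hUfin : U.Finite) (hUcard : U.ncard < 3 * d - 6) :
    (∀ x y : EuclideanSpace ℝ (Fin N),
      (IsFaceDim P {x} 0 ∧ 2 * d - 4 ≤ {u ∈ U | x ∈ u}.ncard) →
      (IsFaceDim P {y} 0 ∧ 2 * d - 4 ≤ {u ∈ U | y ∈ u}.ncard) → x ≠ y →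
      ∃ e : Set (EuclideanSpace ℝ (Fin N)),
        (IsFaceDim P e 1 ∧ d - 1 ≤ {u ∈ U | e ⊆ u}.ncard) ∧ x ∈ e ∧ y ∈ e) ∧
    {x : EuclideanSpace ℝ (Fin N) |
      IsFaceDim P {x} 0 ∧ 2 * d - 4 ≤ {u ∈ U | x ∈ u}.ncard}.ncard ≤ 2 ∧
    (∀ x : EuclideanSpace ℝ (Fin N),
      (IsFaceDim P {x} 0 ∧ 2 * d - 4 ≤ {u ∈ U | x ∈ u}.ncard) →
      ∀ e : Set (EuclideanSpace ℝ (Fin N)),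
        (IsFaceDim P e 1 ∧ d - 1 ≤ {u ∈ U | e ⊆ u}.ncard) → x ∈ e) := by
  -- bad-vertex pair lemma: many common 2-faces
  have hcommon : ∀ x y : EuclideanSpace ℝ (Fin N),
      2 * d - 4 ≤ {u ∈ U | x ∈ u}.ncard → 2 * d - 4 ≤ {u ∈ U | y ∈ u}.ncard →
      d - 1 ≤ ({u ∈ U | x ∈ u} ∩ {u ∈ U | y ∈ u}).ncard := by
    intro x y hx hy
    have hA : {u ∈ U | x ∈ u} ⊆ U := sep_subset _ _
    have hB : {u ∈ U | y ∈ u} ⊆ U := sep_subset _ _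
    have := ncard_add_le hUfin hA hB
    omega
  -- main step: two distinct bad vertices give a common bad edge
  have hmain : ∀ x y : EuclideanSpace ℝ (Fin N),
      (IsFaceDim P {x} 0 ∧ 2 * d - 4 ≤ {u ∈ U | x ∈ u}.ncard) →
      (IsFaceDim P {y} 0 ∧ 2 * d - 4 ≤ {u ∈ U | y ∈ u}.ncard) → x ≠ y →
      ∃ e : Set (EuclideanSpace ℝ (Fin N)),
        (IsFaceDim P e 1 ∧ d - 1 ≤ {u ∈ U | e ⊆ u}.ncard) ∧ x ∈ e ∧ y ∈ e := by
    intro x y hx hy hxy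
    set A := {u ∈ U | x ∈ u} ∩ {u ∈ U | y ∈ u} with hAdef
    have hAsub : A ⊆ U := fun u hu => hu.1.1
    have hAfin : A.Finite := hUfin.subset hAsub
    have hAcard : d - 1 ≤ A.ncard := hcommon x y hx.2 hy.2
    have h2 : 1 < A.ncard := by omega
    obtain ⟨u, hu, u', hu', huu'⟩ := (Set.one_lt_ncard hAfin).mp h2
    have hfu := hU u (hAsub hu)
    have hfu' := hU u' (hAsub hu')
    have hxint : x ∈ u ∩ u' := ⟨hu.1.2, hu'.1.2⟩
    have hyint : y ∈ u ∩ u' := ⟨hu.2.2, hu'.2.2⟩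
    have hedge : IsFaceDim P (u ∩ u') 1 :=
      ⟨hfu.1.inter hfu'.1, ⟨x, hxint⟩,
        le_antisymm (inter_sdim_le_one hfu hfu' huu') (one_le_sdim hxy hxint hyint)⟩
    refine ⟨u ∩ u', ⟨hedge, ?_⟩, hxint, hyint⟩
    have hsub : A ⊆ {v ∈ U | u ∩ u' ⊆ v} := by
      intro v hv
      refine ⟨hv.1.1, ?_⟩
      exact edge_subset hedge (hU v hv.1.1).1 hxy hxint hyint hv.1.2 hv.2.2
    calc d - 1 ≤ A.ncard := hAcard
      _ ≤ _ := Set.ncard_le_ncard hsub (hUfin.subset (sep_subset _ _))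
  refine ⟨hmain, ?_, ?_⟩
  · -- at most two bad vertices
    set Bad := {x : EuclideanSpace ℝ (Fin N) | IsFaceDim P {x} 0 ∧ 2 * d - 4 ≤ {u ∈ U | x ∈ u}.ncard} with hBad
    rcases Set.finite_or_infinite Bad with hfin | hinf
    swap
    · rw [hinf.ncard]; omega
    by_contra hc
    push_neg at hc
    obtain ⟨x, hxB, y, hyB, z, hzB, hxy, hxz, hyz⟩ := (Set.two_lt_ncard hfin).mp hc
    -- the three pairwise common-face sets
    set Ux := {u ∈ U | x ∈ u}
    set Uy := {u ∈ U | y ∈ u}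
    set Uz := {u ∈ U | z ∈ u}
    have hxP : x ∈ P := hxB.1.1.subset rfl
    have hyP : y ∈ P := hyB.1.1.subset rfl
    have hzP : z ∈ P := hzB.1.1.subset rfl
    set A := Ux ∩ Uy
    set B := Ux ∩ Uz
    set C := Uy ∩ Uz
    have hAU : A ⊆ U := fun u hu => hu.1.1
    have hBU : B ⊆ U := fun u hu => hu.1.1
    have hCU : C ⊆ U := fun u hu => hu.1.1
    have hAc : d - 1 ≤ A.ncard := hcommon x y hxB.2 hyB.2
    have hBc : d - 1 ≤ B.ncard := hcommon x z hxB.2 hzB.2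
    have hCc : d - 1 ≤ C.ncard := hcommon y z hyB.2 hzB.2
    -- triple intersection has at most one element
    set T := Ux ∩ Uy ∩ Uz with hT
    have hTU : T ⊆ U := fun u hu => hu.1.1.1
    have hTcard : T.ncard ≤ 1 := by
      rw [Set.ncard_le_one (hUfin.subset hTU)]
      intro u hu v hv
      by_contra huv
      have hfu := hU u (hTU hu)
      have hfv := hU v (hTU hv)
      have hle : sdim (u ∩ v) ≤ 1 := inter_sdim_le_one hfu hfv huv
      have hxm : x ∈ u ∩ v := ⟨hu.1.1.2, hv.1.1.2⟩
      have hym : y ∈ u ∩ v := ⟨hu.1.2.2, hv.1.2.2⟩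
      have hzm : z ∈ u ∩ v := ⟨hu.2.2, hv.2.2⟩
      have hcol : Collinear ℝ (u ∩ v : Set (EuclideanSpace ℝ (Fin N))) := by
        rw [collinear_iff_finrank_le_one]
        rw [← direction_affineSpan]
        exact hle
      have hcol3 : Collinear ℝ ({x, y, z} : Set (EuclideanSpace ℝ (Fin N))) := by
        refine hcol.subset ?_
        intro w hw
        rcases hw with rfl | rfl | rfl
        exacts [hxm, hym, hzm]
      rcases hcol3.wbtw_or_wbtw_or_wbtw with h | h | h
      · exact not_wbtw_exposed hyB.1.1 hxP hzP hxy hyz.symm h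
      · exact not_wbtw_exposed hzB.1.1 hyP hxP hyz hxz h
      · exact not_wbtw_exposed hxB.1.1 hzP hyP hxz.symm hxy.symm h
    -- counting
    have hABT : A ∩ B ⊆ T := by
      rintro u ⟨⟨h1, h2⟩, ⟨_, h3⟩⟩
      exact ⟨⟨h1, h2⟩, h3⟩
    have hABC_T : (A ∪ B) ∩ C ⊆ T := by
      rintro u ⟨hab, ⟨h1, h2⟩⟩
      rcases hab with ⟨h3, h4⟩ | ⟨h3, h4⟩
      · exact ⟨⟨h3, h4⟩, h2⟩
      · exact ⟨⟨h3, h1⟩, h2⟩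
    have hABfin : (A ∪ B).Finite := hUfin.subset (union_subset hAU hBU)
    have e1 := Set.ncard_union_add_ncard_inter A B (hUfin.subset hAU) (hUfin.subset hBU)
    have e2 := Set.ncard_union_add_ncard_inter (A ∪ B) C hABfin (hUfin.subset hCU)
    have b1 : (A ∩ B).ncard ≤ 1 :=
      le_trans (Set.ncard_le_ncard hABT (hUfin.subset hTU)) hTcard
    have b2 : ((A ∪ B) ∩ C).ncard ≤ 1 :=
      le_trans (Set.ncard_le_ncard hABC_T (hUfin.subset hTU)) hTcard
    have b3 : ((A ∪ B) ∪ C).ncard ≤ U.ncard :=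
      Set.ncard_le_ncard (union_subset (union_subset hAU hBU) hCU) hUfin
    omega
  · -- every bad vertex on every bad edge
    intro x hx e he
    set Ux := {u ∈ U | x ∈ u}
    set Ue := {u ∈ U | e ⊆ u}
    have hUxU : Ux ⊆ U := sep_subset _ _
    have hUeU : Ue ⊆ U := sep_subset _ _
    have hcnt := ncard_add_le hUfin hUxU hUeU
    have h2 : 1 < (Ux ∩ Ue).ncard := by omega
    obtain ⟨u, hu, u', hu', huu'⟩ :=
      (Set.one_lt_ncard (hUfin.subset (fun v hv => hUxU hv.1))).mp h2
    obtain ⟨a, b, hae, hbe, hab⟩ := exists_pair_of_sdim (by rw [he.1.2.2])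
    have hfu := hU u (hUxU hu.1)
    have hfu' := hU u' (hUxU hu'.1)
    have haint : a ∈ u ∩ u' := ⟨hu.2.2 hae, hu'.2.2 hae⟩
    have hbint : b ∈ u ∩ u' := ⟨hu.2.2 hbe, hu'.2.2 hbe⟩
    have hg : IsFaceDim P (u ∩ u') 1 :=
      ⟨hfu.1.inter hfu'.1, ⟨a, haint⟩,
        le_antisymm (inter_sdim_le_one hfu hfu' huu') (one_le_sdim hab haint hbint)⟩
    have hsub : u ∩ u' ⊆ e := edge_subset hg he.1.1 hab haint hbint hae hbe
    exact hsub ⟨hu.1.2, hu'.1.2⟩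
end

section
/- Let P be a convex polytope of dimension d, let 3 ≤ k ≤ d-3, and let U be a set of k-dimensional faces of P with |U| < (k+1)(d-k). Let V be the set of vertices of P that belong to at least k(d-k) faces in U. Then any k+1 vertices in V are affinely dependent; consequently the affine span of V has dimension at most k-1. -/
open Set

/-- An exposed face of `P` equals the intersection of `P` with its affine span. -/
lemma face_eq_inter_span {N : ℕ} {P F : Set (EuclideanSpace ℝ (Fin N))}
    (hF : IsExposed ℝ P F) (hne : F.Nonempty) :
    F = P ∩ ↑(affineSpan ℝ F) := by
  obtain ⟨l, hl⟩ := hF hne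
  obtain ⟨x₀, hx₀⟩ := hne
  rw [hl] at hx₀
  set S : AffineSubspace ℝ (EuclideanSpace ℝ (Fin N)) :=
    AffineSubspace.comap l.toLinearMap.toAffineMap
      (AffineSubspace.mk' (l x₀) (⊥ : Submodule ℝ ℝ)) with hS
  have hmemS : ∀ x, x ∈ S ↔ l x = l x₀ := by
    intro x
    simp [hS, AffineSubspace.mem_comap, AffineSubspace.mem_mk', sub_eq_zero]
  have hFS : F ⊆ (S : Set _) := by
    intro x hx
    rw [hl] at hx
    exact (hmemS x).mpr (le_antisymm (hx₀.2 x hx.1) (hx.2 x₀ hx₀.1))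
  apply Set.Subset.antisymm
  · exact Set.subset_inter (fun x hx => ((hl ▸ hx) : _ ∧ _).1) (subset_affineSpan ℝ F)
  · rintro x ⟨hxP, hxspan⟩
    have hxS : x ∈ S := (affineSpan_le.mpr hFS) hxspan
    have hlx : l x = l x₀ := (hmemS x).mp hxS
    rw [hl]
    exact ⟨hxP, fun y hy => (hx₀.2 y hy).trans_eq hlx.symm⟩

/-- If a set `u` of dimension `k` contains `k+1` affinely independent points,
then the affine span of those points is the affine span of `u`. -/
lemma span_eq_of_mem {N k : ℕ} {u : Set (EuclideanSpace ℝ (Fin N))}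
    (hu : sdim u = k) {v : Fin (k + 1) → EuclideanSpace ℝ (Fin N)}
    (hv : AffineIndependent ℝ v) (hall : ∀ i, v i ∈ u) :
    affineSpan ℝ (Set.range v) = affineSpan ℝ u := by
  have hle : affineSpan ℝ (Set.range v) ≤ affineSpan ℝ u :=
    affineSpan_mono ℝ (Set.range_subset_iff.mpr hall)
  have hd1 : Module.finrank ℝ (affineSpan ℝ (Set.range v)).direction = k := by
    rw [direction_affineSpan]
    exact hv.finrank_vectorSpan (by simp)
  have hu' : Module.finrank ℝ (affineSpan ℝ u).direction = k := hu
  have hdeq : (affineSpan ℝ (Set.range v)).direction = (affineSpan ℝ u).direction :=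
    Submodule.eq_of_le_of_finrank_le (AffineSubspace.direction_le hle)
      (by rw [hd1, hu'])
  exact AffineSubspace.ext_of_direction_eq hdeq
    ⟨v 0, mem_affineSpan ℝ ⟨0, rfl⟩, mem_affineSpan ℝ (hall 0)⟩

/-- Let `P` be a `d`-dimensional convex polytope, `3 ≤ k ≤ d-3`, and `U` a set
of `k`-dimensional faces of `P` with `|U| < (k+1)(d-k)`.  Let `V` be the set of
vertices of `P` belonging to at least `k(d-k)` faces in `U`.  Then any `k+1`
vertices in `V` are affinely dependent, and consequently the affine span of `V`
has dimension at most `k-1`. -/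
theorem stmt_14 (d k : ℕ) (hk3 : 3 ≤ k) (hkd : k + 3 ≤ d) {N : ℕ}
    (P : Set (EuclideanSpace ℝ (Fin N))) (hP : IsPolytope P) (hdim : sdim P = d)
    (U : Set (Set (EuclideanSpace ℝ (Fin N)))) (hU : ∀ u ∈ U, IsFaceDim P u k)
    (hUfin : U.Finite) (hUcard : U.ncard < (k + 1) * (d - k)) :
    (∀ v : Fin (k + 1) → EuclideanSpace ℝ (Fin N),
      (∀ i, IsFaceDim P {v i} 0 ∧ k * (d - k) ≤ {u ∈ U | v i ∈ u}.ncard) →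
      ¬ AffineIndependent ℝ v) ∧
    sdim {x : EuclideanSpace ℝ (Fin N) |
      IsFaceDim P {x} 0 ∧ k * (d - k) ≤ {u ∈ U | x ∈ u}.ncard} ≤ k - 1 := by
  classical
  have key : ∀ v : Fin (k + 1) → EuclideanSpace ℝ (Fin N),
      (∀ i, IsFaceDim P {v i} 0 ∧ k * (d - k) ≤ {u ∈ U | v i ∈ u}.ncard) →
      ¬ AffineIndependent ℝ v := by
    intro v hv hvind
    set Uf := hUfin.toFinset with hUf
    have hUfcard : Uf.card = U.ncard := (Set.ncard_eq_toFinset_card _ hUfin).symm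
    -- lower bound on counts per vertex
    have hcount : ∀ i, k * (d - k) ≤ (Uf.filter (fun u => v i ∈ u)).card := by
      intro i
      have hset : {u ∈ U | v i ∈ u} = ↑(Uf.filter (fun u => v i ∈ u)) := by
        ext u; simp [hUf]
      have h2 := (hv i).2
      rwa [hset, Set.ncard_coe_finset] at h2
    -- double counting
    have hswap : ∑ i : Fin (k + 1), (Uf.filter (fun u => v i ∈ u)).card
        = ∑ u ∈ Uf, (Finset.univ.filter (fun i : Fin (k + 1) => v i ∈ u)).card := by
      simp only [Finset.card_filter]
      rw [Finset.sum_comm]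
    have hlow : (k + 1) * (k * (d - k))
        ≤ ∑ u ∈ Uf, (Finset.univ.filter (fun i : Fin (k + 1) => v i ∈ u)).card := by
      rw [← hswap]
      calc (k + 1) * (k * (d - k))
          = ∑ _i : Fin (k + 1), k * (d - k) := by
            rw [Finset.sum_const, Finset.card_univ, Fintype.card_fin, smul_eq_mul]
        _ ≤ _ := Finset.sum_le_sum fun i _ => hcount i
    -- at most one face of U contains all the vᵢ
    have huniq : ∀ u ∈ Uf, ∀ u' ∈ Uf, (∀ i, v i ∈ u) → (∀ i, v i ∈ u') → u = u' := by
      intro u hu1 u' hu2 h1 h2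
      rw [hUf, Set.Finite.mem_toFinset] at hu1 hu2
      obtain ⟨he, hne, hd⟩ := hU u hu1
      obtain ⟨he', hne', hd'⟩ := hU u' hu2
      rw [face_eq_inter_span he hne, face_eq_inter_span he' hne',
        ← span_eq_of_mem hd hvind h1, ← span_eq_of_mem hd' hvind h2]
    set E := Uf.filter (fun u => ∀ i, v i ∈ u) with hE
    have hEcard : E.card ≤ 1 := Finset.card_le_one.mpr (by
      intro a ha b hb
      rw [hE, Finset.mem_filter] at ha hb
      exact huniq a ha.1 b hb.1 ha.2 hb.2)
    -- upper bound on the double count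
    have hupper : ∑ u ∈ Uf, (Finset.univ.filter (fun i : Fin (k + 1) => v i ∈ u)).card
        ≤ k * Uf.card + 1 := by
      have hsplit := Finset.sum_filter_add_sum_filter_not Uf (fun u => ∀ i, v i ∈ u)
        (fun u => (Finset.univ.filter (fun i : Fin (k + 1) => v i ∈ u)).card)
      have hb1 : ∑ u ∈ E, (Finset.univ.filter (fun i : Fin (k + 1) => v i ∈ u)).card
          ≤ E.card * (k + 1) :=
        Finset.sum_le_card_nsmul _ _ _ (fun u _ => by
          calc (Finset.univ.filter (fun i : Fin (k + 1) => v i ∈ u)).card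
              ≤ (Finset.univ : Finset (Fin (k + 1))).card := Finset.card_filter_le _ _
            _ = k + 1 := by simp)
      have hb2 : ∑ u ∈ Uf.filter (fun u => ¬∀ i, v i ∈ u),
            (Finset.univ.filter (fun i : Fin (k + 1) => v i ∈ u)).card
          ≤ (Uf.filter (fun u => ¬∀ i, v i ∈ u)).card * k :=
        Finset.sum_le_card_nsmul _ _ _ (fun u hu => by
          rw [Finset.mem_filter] at hu
          push_neg at hu
          obtain ⟨i, hi⟩ := hu.2
          have hsub : Finset.univ.filter (fun j : Fin (k + 1) => v j ∈ u)
              ⊆ Finset.univ.erase i := by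
            intro j hj
            rw [Finset.mem_filter] at hj
            exact Finset.mem_erase.mpr ⟨fun h => hi (h ▸ hj.2), Finset.mem_univ j⟩
          calc (Finset.univ.filter (fun j : Fin (k + 1) => v j ∈ u)).card
              ≤ (Finset.univ.erase i).card := Finset.card_le_card hsub
            _ = k := by
                rw [Finset.card_erase_of_mem (Finset.mem_univ i), Finset.card_univ,
                  Fintype.card_fin]
                rfl)
      have hpart : E.card + (Uf.filter (fun u => ¬∀ i, v i ∈ u)).card = Uf.card := by
        rw [hE]
        exact Finset.card_filter_add_card_filter_not _
      calc ∑ u ∈ Uf, (Finset.univ.filter (fun i : Fin (k + 1) => v i ∈ u)).card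
          = (∑ u ∈ E, (Finset.univ.filter (fun i : Fin (k + 1) => v i ∈ u)).card)
            + ∑ u ∈ Uf.filter (fun u => ¬∀ i, v i ∈ u),
                (Finset.univ.filter (fun i : Fin (k + 1) => v i ∈ u)).card := hsplit.symm
        _ ≤ E.card * (k + 1) + (Uf.filter (fun u => ¬∀ i, v i ∈ u)).card * k :=
            Nat.add_le_add hb1 hb2
        _ = k * (E.card + (Uf.filter (fun u => ¬∀ i, v i ∈ u)).card) + E.card := by ring
        _ = k * Uf.card + E.card := by rw [hpart]
        _ ≤ k * Uf.card + 1 := Nat.add_le_add_left hEcard _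
    -- arithmetic contradiction
    have h1 : (k + 1) * (k * (d - k)) ≤ k * U.ncard + 1 := by
      rw [← hUfcard]; exact hlow.trans hupper
    have heq : (k + 1) * (k * (d - k)) = k * ((k + 1) * (d - k)) := by ring
    rw [heq] at h1
    set m := (k + 1) * (d - k) with hm
    have hm1 : 1 ≤ m := lt_of_le_of_lt (Nat.zero_le _) hUcard
    have h2 : U.ncard ≤ m - 1 := by omega
    have h3 : k * U.ncard ≤ k * (m - 1) := Nat.mul_le_mul_left k h2
    have h4 : k * (m - 1) + k = k * m := by
      rw [← Nat.mul_succ]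
      congr 1
      omega
    have h5 : k * m + k ≤ k * m + 1 := by
      calc k * m + k ≤ (k * (m - 1) + 1) + k :=
            Nat.add_le_add_right (h1.trans (Nat.add_le_add_right h3 1)) k
        _ = k * (m - 1) + k + 1 := by ring
        _ = k * m + 1 := by rw [h4]
    have : k ≤ 1 := Nat.le_of_add_le_add_left h5
    omega
  refine ⟨key, ?_⟩
  set Vs := {x : EuclideanSpace ℝ (Fin N) |
    IsFaceDim P {x} 0 ∧ k * (d - k) ≤ {u ∈ U | x ∈ u}.ncard} with hVs
  obtain ⟨t, hts, hspan, hind⟩ := exists_affineIndependent ℝ (EuclideanSpace ℝ (Fin N)) Vs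
  have htfin : t.Finite := finite_set_of_fin_dim_affineIndependent ℝ hind
  haveI : Fintype t := htfin.fintype
  have hcardt : Fintype.card t = t.ncard := by
    rw [← Nat.card_coe_set_eq, Nat.card_eq_fintype_card]
  have hcard : t.ncard ≤ k := by
    by_contra hc
    push_neg at hc
    obtain ⟨f⟩ : Nonempty (Fin (k + 1) ↪ t) :=
      Function.Embedding.nonempty_of_card_le (by
        rw [Fintype.card_fin, hcardt]; omega)
    exact key (fun i => (f i : EuclideanSpace ℝ (Fin N)))
      (fun i => hts (f i).2) (hind.comp_embedding f)
  have hsd : sdim Vs = Module.finrank ℝ (vectorSpan ℝ t) := by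
    unfold sdim
    rw [← hspan, direction_affineSpan]
  rw [hsd]
  rcases t.eq_empty_or_nonempty with rfl | hne
  · rw [vectorSpan_empty, finrank_bot]
    exact Nat.zero_le _
  · have hpos : 0 < t.ncard := (Set.ncard_pos htfin).mpr hne
    have hc : Fintype.card t = (t.ncard - 1) + 1 := by rw [hcardt]; omega
    have hfr := hind.finrank_vectorSpan hc
    rw [Subtype.range_coe] at hfr
    rw [hfr]
    omega
end
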